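/- arXiv:2601.01193 — 8 statements merged into one kernel-verified Lean document; each statement's English description precedes it below -/
import Mathlib

section
/- For n ≥ 3, the characteristic polynomial of the adjacency-diametrical matrix of the path P_n equals Φ_n(x) − (n−1)^2 Φ_{n−2}(x) + 2(1−n), where Φ_k(x) = ∏_{j=1}^{k} (x − 2cos(πj/(k+1))) is the characteristic polynomial of the adjacency matrix of the path P_k. -/
open Polynomial

/-- The adjacency-diametrical matrix of the path `Pₙ` with vertices `0,1,…,n-1` in path order:
entries `1` between consecutive vertices, `n-1` between the two end vertices, `0` otherwise. -/
def pathAD (n : ℕ) : Matrix (Fin n) (Fin n) ℝ := fun i j =>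
  if i.val + 1 = j.val ∨ j.val + 1 = i.val then 1
  else if (i.val = 0 ∧ j.val = n - 1) ∨ (j.val = 0 ∧ i.val = n - 1) then (n : ℝ) - 1
  else 0

/-- `Φ_k(x) = ∏_{j=1}^{k} (x − 2cos(πj/(k+1)))`, the characteristic polynomial of the
adjacency matrix of the path `P_k`. -/
noncomputable def pathPhi (k : ℕ) : Polynomial ℝ :=
  ∏ j ∈ Finset.range k, (X - C (2 * Real.cos (Real.pi * (j + 1) / (k + 1))))

noncomputable def pp : ℕ → Polynomial ℝ
  | 0 => 1
  | 1 => X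
  | (k+2) => X * pp (k+1) - pp k

lemma pp_monic_deg : ∀ k, (pp k).Monic ∧ (pp k).natDegree = k
  | 0 => ⟨monic_one, by simp [pp]⟩
  | 1 => ⟨monic_X, by simp [pp]⟩
  | (k+2) => by
    obtain ⟨h1, d1⟩ := pp_monic_deg (k+1)
    obtain ⟨h0, d0⟩ := pp_monic_deg k
    have hm : (X * pp (k+1)).Monic := monic_X.mul h1
    have hdm : (X * pp (k+1)).natDegree = k + 2 := by
      rw [natDegree_mul (X_ne_zero) h1.ne_zero, natDegree_X, d1]; omega
    have hlt : (pp k).degree < (X * pp (k+1)).degree := by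
      rw [degree_eq_natDegree h0.ne_zero, degree_eq_natDegree hm.ne_zero, hdm, d0]
      exact_mod_cast Nat.lt_add_of_pos_right (by omega)
    constructor
    · exact (hm.sub_of_left hlt)
    · show (X * pp (k+1) - pp k).natDegree = k + 2
      rw [natDegree_sub_eq_left_of_natDegree_lt, hdm]
      rw [hdm, d0]; omega

lemma pp_eval (θ : ℝ) : ∀ k, (pp k).eval (2 * Real.cos θ) * Real.sin θ = Real.sin ((k+1) * θ)
  | 0 => by simp [pp]
  | 1 => by
    simp only [pp, eval_X]
    rw [show ((1:ℕ)+1:ℝ) * θ = 2 * θ by push_cast; ring, Real.sin_two_mul]; ring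
  | (k+2) => by
    have h1 := pp_eval θ (k+1)
    have h2 := pp_eval θ k
    simp only [pp, eval_sub, eval_mul, eval_X]
    have e3 : ((k+2:ℕ)+1:ℝ) * θ = ((k+1:ℕ)+1:ℝ) * θ + θ := by push_cast; ring
    have e2 : ((k:ℕ)+1:ℝ) * θ = ((k+1:ℕ)+1:ℝ) * θ - θ := by push_cast; ring
    rw [e3, Real.sin_add]
    rw [e2, Real.sin_sub] at h2
    linear_combination 2 * Real.cos θ * h1 - h2

lemma pathPhi_eq_pp (k : ℕ) : pathPhi k = pp k := by
  rcases Nat.eq_zero_or_pos k with rfl | hk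
  · simp [pathPhi, pp]
  have hmono : (pathPhi k).Monic := monic_prod_of_monic _ _ fun j _ => monic_X_sub_C _
  have hdeg : (pathPhi k).natDegree = k := by
    rw [pathPhi, natDegree_prod_of_monic _ _ fun j _ => monic_X_sub_C _]
    simp only [natDegree_X_sub_C, Finset.sum_const, smul_eq_mul, mul_one, Finset.card_range]
  obtain ⟨hm2, hd2⟩ := pp_monic_deg k
  set q := pp k - pathPhi k with hq
  rcases eq_or_ne q 0 with h0 | h0
  · have := sub_eq_zero.mp h0; exact this.symm
  exfalso
  -- q has degree < k
  have hdlt : q.natDegree < k := by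
    have : q.degree < (pp k).degree := by
      apply degree_sub_lt _ hm2.ne_zero
      · rw [hm2.leadingCoeff, hmono.leadingCoeff]
      · rw [degree_eq_natDegree hm2.ne_zero, degree_eq_natDegree hmono.ne_zero, hd2, hdeg]
    rw [degree_eq_natDegree hm2.ne_zero, hd2] at this
    exact (natDegree_lt_iff_degree_lt h0).mpr this
  -- k distinct roots
  set f : ℕ → ℝ := fun j => 2 * Real.cos (Real.pi * (j + 1) / (k + 1)) with hf
  have hθ : ∀ j < k, 0 < Real.pi * (j + 1) / (k + 1) ∧ Real.pi * (j + 1) / (k + 1) < Real.pi := by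
    intro j hj
    constructor
    · apply div_pos (by positivity) (by positivity)
    · rw [div_lt_iff₀ (by positivity)]
      have : (j:ℝ) + 1 < (k:ℝ) + 1 := by exact_mod_cast Nat.succ_lt_succ hj
      nlinarith [Real.pi_pos]
  have hroot : ∀ j < k, q.eval (f j) = 0 := by
    intro j hj
    have hθj := hθ j hj
    have hsin : Real.sin (Real.pi * (j + 1) / (k + 1)) ≠ 0 :=
      ne_of_gt (Real.sin_pos_of_pos_of_lt_pi hθj.1 hθj.2)
    have hppz : (pp k).eval (f j) = 0 := by
      have := pp_eval (Real.pi * (j + 1) / (k + 1)) k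
      have harg : ((k:ℕ)+1:ℝ) * (Real.pi * (j + 1) / (k + 1)) = (j+1 : ℕ) * Real.pi := by
        push_cast
        field_simp
      rw [harg, Real.sin_nat_mul_pi] at this
      exact (mul_eq_zero.mp this).resolve_right hsin
    have hphiz : (pathPhi k).eval (f j) = 0 := by
      rw [pathPhi, eval_prod]
      apply Finset.prod_eq_zero (Finset.mem_range.mpr hj)
      simp [hf]
    simp [hq, hppz, hphiz]
  have hinj : ∀ j1 < k, ∀ j2 < k, f j1 = f j2 → j1 = j2 := by
    intro j1 h1 j2 h2 hfe
    by_contra hne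
    wlog hlt : j1 < j2 generalizing j1 j2
    · exact this j2 h2 j1 h1 hfe.symm (Ne.symm hne) (by omega)
    have hlt' : Real.pi * (j1 + 1) / (k + 1) < Real.pi * (j2 + 1) / (k + 1) := by
      have : (j1:ℝ) + 1 < (j2:ℝ) + 1 := by exact_mod_cast Nat.succ_lt_succ hlt
      gcongr
    have hc : Real.cos (Real.pi * (j2 + 1) / (k + 1)) < Real.cos (Real.pi * (j1 + 1) / (k + 1)) :=
      Real.cos_lt_cos_of_nonneg_of_le_pi (le_of_lt (hθ j1 h1).1) (le_of_lt (hθ j2 h2).2) hlt'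
    simp only [hf] at hfe
    nlinarith
  -- build Finset of roots
  set S : Finset ℝ := (Finset.range k).image f with hS
  have hcard : S.card = k := by
    rw [hS, Finset.card_image_of_injOn, Finset.card_range]
    intro j1 hj1 j2 hj2 hfe
    exact hinj j1 (Finset.mem_range.mp hj1) j2 (Finset.mem_range.mp hj2) hfe
  have : q = 0 := by
    apply Polynomial.eq_zero_of_natDegree_lt_card_of_eval_eq_zero' q S
    · intro x hx
      obtain ⟨j, hj, rfl⟩ := Finset.mem_image.mp hx
      exact hroot j (Finset.mem_range.mp hj)
    · rw [hcard]; exact hdlt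
  exact h0 this

lemma val_succAbove {n : ℕ} (p : Fin (n+1)) (i : Fin n) :
    (p.succAbove i).val = if i.val < p.val then i.val else i.val + 1 := by
  rw [Fin.succAbove]
  split_ifs with h1 h2 h3 <;> simp_all [Fin.lt_def]

noncomputable def Tm (k : ℕ) : Matrix (Fin k) (Fin k) (Polynomial ℝ) :=
  fun i j => if i.val = j.val then X else if i.val + 1 = j.val ∨ j.val + 1 = i.val then -1 else 0

lemma detTm : ∀ k, (Tm k).det = pp k
  | 0 => by simp [pp, Matrix.det_fin_zero]
  | 1 => by simp [Matrix.det_fin_one, Tm, pp]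
  | (k+2) => by
    have ih1 := detTm (k+1)
    have ih0 := detTm k
    have hsub0 : (Tm (k+2)).submatrix Fin.succ ((0 : Fin (k+2)).succAbove) = Tm (k+1) := by
      ext i j; simp only [Matrix.submatrix_apply]; unfold Tm
      simp only [Matrix.submatrix_apply, Fin.succAbove_zero, Fin.val_succ]
      split_ifs <;> first | rfl | omega | (simp_all; omega) | simp_all
    have hN : ((Tm (k+2)).submatrix Fin.succ ((1 : Fin (k+2)).succAbove)).det = - pp k := by
      rw [Matrix.det_succ_column_zero, Fin.sum_univ_succ]
      have hz : ∀ i : Fin k,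
          (Tm (k+2)).submatrix Fin.succ ((1 : Fin (k+2)).succAbove) i.succ 0 = 0 := by
        intro i; simp only [Matrix.submatrix_apply]; unfold Tm
        simp only [Matrix.submatrix_apply, val_succAbove, Fin.val_succ, Fin.val_zero, Fin.val_one]
        split_ifs <;> first | rfl | omega | (simp_all; omega) | simp_all
      have hsub : ((Tm (k+2)).submatrix Fin.succ ((1 : Fin (k+2)).succAbove)).submatrix
          ((0 : Fin (k+1)).succAbove) Fin.succ = Tm k := by
        ext i j; simp only [Matrix.submatrix_apply]; unfold Tm
        simp only [Matrix.submatrix_apply, Fin.succAbove_zero, val_succAbove, Fin.val_succ,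
          Fin.val_zero, Fin.val_one]
        split_ifs <;> first | rfl | omega | (simp_all; omega) | simp_all
      have hval : (Tm (k+2)).submatrix Fin.succ ((1 : Fin (k+2)).succAbove) 0 0 = -1 := by
        simp only [Matrix.submatrix_apply]; unfold Tm
        simp only [Matrix.submatrix_apply, val_succAbove, Fin.val_succ, Fin.val_zero, Fin.val_one]
        split_ifs <;> first | rfl | omega | (simp_all; omega) | simp_all
      rw [Finset.sum_eq_zero (fun i _ => by rw [hz i]; ring), hsub, hval, ih0]
      simp
    have h00 : Tm (k+2) 0 0 = X := by
      unfold Tm; split_ifs <;> first | rfl | omega | (simp_all; omega) | simp_all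
    have h01 : Tm (k+2) 0 1 = -1 := by
      unfold Tm
      simp only [Fin.val_zero, Fin.val_one]
      split_ifs <;> first | rfl | omega | (simp_all; omega) | simp_all
    have hz2 : ∀ j : Fin k, Tm (k+2) 0 j.succ.succ = 0 := by
      intro j; unfold Tm
      simp only [Fin.val_succ, Fin.val_zero]
      split_ifs <;> first | rfl | omega | (simp_all; omega) | simp_all
    rw [Matrix.det_succ_row_zero, Fin.sum_univ_succ, Fin.sum_univ_succ]
    rw [Finset.sum_eq_zero (fun j _ => by rw [hz2 j]; ring)]
    rw [Fin.succ_zero_eq_one, h00, h01, hsub0, ih1, hN]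
    show _ = pp (k+2)
    simp [pp]
    ring

section
variable (m : ℕ) (c : Polynomial ℝ)

noncomputable def R0 : Fin (m+3) → Polynomial ℝ := fun j => if j.val = m+2 then -c else 0
noncomputable def RL : Fin (m+3) → Polynomial ℝ := fun j => if j.val = 0 then -c else 0

lemma neg_one_sq_pow (k : ℕ) : ((-1 : Polynomial ℝ)^k) * ((-1 : Polynomial ℝ)^k) = 1 := by
  rw [← pow_add]
  exact Even.neg_one_pow ⟨k, by ring⟩

lemma detD2 : ((Tm (m+3)).updateRow 0 (R0 m c)).det = -c := by
  set D2 := (Tm (m+3)).updateRow 0 (R0 m c) with hD2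
  rw [Matrix.det_succ_row_zero]
  rw [Finset.sum_eq_single_of_mem (Fin.last (m+2)) (Finset.mem_univ _) ?side]
  case side =>
    intro b _ hb
    have : D2 0 b = 0 := by
      rw [hD2, Matrix.updateRow_self]
      have : b.val ≠ m + 2 := by
        intro h; exact hb (Fin.ext (by simp [h, Fin.val_last]))
      simp [R0, this]
    rw [this]; ring
  have hval : D2 0 (Fin.last (m+2)) = -c := by
    rw [hD2, Matrix.updateRow_self]; simp [R0, Fin.val_last]
  have hsub : (D2.submatrix Fin.succ (Fin.last (m+2)).succAbove).det = (-1 : Polynomial ℝ)^(m+2) := by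
    have htri : (D2.submatrix Fin.succ (Fin.last (m+2)).succAbove).BlockTriangular id := by
      intro i j hij
      rw [hD2]
      simp only [Matrix.submatrix_apply, Fin.succAbove_last]
      rw [Matrix.updateRow_ne (Fin.succ_ne_zero i)]
      unfold Tm
      simp only [Fin.val_succ, Fin.coe_castSucc]
      have : j.val < i.val := hij
      split_ifs <;> first | rfl | omega | (simp_all; omega) | simp_all
    rw [Matrix.det_of_upperTriangular htri]
    have hdiag : ∀ i : Fin (m+2), (D2.submatrix Fin.succ (Fin.last (m+2)).succAbove) i i = -1 := by
      intro i
      rw [hD2]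
      simp only [Matrix.submatrix_apply, Fin.succAbove_last]
      rw [Matrix.updateRow_ne (Fin.succ_ne_zero i)]
      unfold Tm
      simp only [Fin.val_succ, Fin.coe_castSucc]
      split_ifs <;> first | rfl | omega | (simp_all; omega) | simp_all
    rw [Finset.prod_congr rfl (fun i _ => hdiag i)]
    simp [Finset.prod_const, Finset.card_univ]
  rw [hval, hsub, Fin.val_last]
  linear_combination (-c) * neg_one_sq_pow (m+2)

lemma detD3 : ((Tm (m+3)).updateRow (Fin.last (m+2)) (RL m c)).det = -c := by
  set D3 := (Tm (m+3)).updateRow (Fin.last (m+2)) (RL m c) with hD3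
  rw [Matrix.det_succ_row D3 (Fin.last (m+2))]
  rw [Finset.sum_eq_single_of_mem (0 : Fin (m+3)) (Finset.mem_univ _) ?side]
  case side =>
    intro b _ hb
    have : D3 (Fin.last (m+2)) b = 0 := by
      rw [hD3, Matrix.updateRow_self]
      have : b.val ≠ 0 := by
        intro h; exact hb (Fin.ext (by simp [h]))
      simp [RL, this]
    rw [this]; ring
  have hval : D3 (Fin.last (m+2)) 0 = -c := by
    rw [hD3, Matrix.updateRow_self]; simp [RL]
  have hlast : ∀ i : Fin (m+2), (Fin.castSucc i) ≠ Fin.last (m+2) := fun i => (Fin.castSucc_lt_last i).ne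
  have hsub : (D3.submatrix (Fin.last (m+2)).succAbove (0 : Fin (m+3)).succAbove).det
      = (-1 : Polynomial ℝ)^(m+2) := by
    have htri : (D3.submatrix (Fin.last (m+2)).succAbove (0 : Fin (m+3)).succAbove).BlockTriangular OrderDual.toDual := by
      intro i j hij
      rw [hD3]
      simp only [Matrix.submatrix_apply, Fin.succAbove_last, Fin.succAbove_zero]
      rw [Matrix.updateRow_ne (hlast i)]
      unfold Tm
      simp only [Fin.val_succ, Fin.coe_castSucc]
      have : i.val < j.val := hij
      split_ifs <;> first | rfl | omega | (simp_all; omega) | simp_all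
    rw [Matrix.det_of_lowerTriangular _ htri]
    have hdiag : ∀ i : Fin (m+2),
        (D3.submatrix (Fin.last (m+2)).succAbove (0 : Fin (m+3)).succAbove) i i = -1 := by
      intro i
      rw [hD3]
      simp only [Matrix.submatrix_apply, Fin.succAbove_last, Fin.succAbove_zero]
      rw [Matrix.updateRow_ne (hlast i)]
      unfold Tm
      simp only [Fin.val_succ, Fin.coe_castSucc]
      split_ifs <;> first | rfl | omega | (simp_all; omega) | simp_all
    rw [Finset.prod_congr rfl (fun i _ => hdiag i)]
    simp [Finset.prod_const, Finset.card_univ]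
  rw [hval, hsub, Fin.val_last, Fin.val_zero]
  linear_combination (-c) * neg_one_sq_pow (m+2)


lemma detD4 : (((Tm (m+3)).updateRow 0 (R0 m c)).updateRow (Fin.last (m+2)) (RL m c)).det
    = -(c^2) * pp (m+1) := by
  have h0l : (0 : Fin (m+3)) ≠ Fin.last (m+2) := by
    simp [Fin.ext_iff]
  set D4 := ((Tm (m+3)).updateRow 0 (R0 m c)).updateRow (Fin.last (m+2)) (RL m c) with hD4
  rw [Matrix.det_succ_row_zero]
  rw [Finset.sum_eq_single_of_mem (Fin.last (m+2)) (Finset.mem_univ _) ?side]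
  case side =>
    intro b _ hb
    have : D4 0 b = 0 := by
      rw [hD4, Matrix.updateRow_ne h0l, Matrix.updateRow_self]
      have : b.val ≠ m + 2 := fun h => hb (Fin.ext (by simp [h, Fin.val_last]))
      simp [R0, this]
    rw [this]; ring
  have hval : D4 0 (Fin.last (m+2)) = -c := by
    rw [hD4, Matrix.updateRow_ne h0l, Matrix.updateRow_self]
    simp [R0, Fin.val_last]
  have hne2 : ∀ i : Fin (m+1), (Fin.castSucc i).succ ≠ Fin.last (m+2) := by
    intro i
    simp [Fin.ext_iff]
    omega
  set W := D4.submatrix Fin.succ (Fin.last (m+2)).succAbove with hW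
  have hWdet : W.det = (-1 : Polynomial ℝ)^(m+1) * (-c) * pp (m+1) := by
    rw [Matrix.det_succ_row W (Fin.last (m+1))]
    rw [Finset.sum_eq_single_of_mem (0 : Fin (m+2)) (Finset.mem_univ _) ?side2]
    case side2 =>
      intro b _ hb
      have : W (Fin.last (m+1)) b = 0 := by
        rw [hW]
        simp only [Matrix.submatrix_apply, Fin.succAbove_last]
        rw [hD4, Fin.succ_last, Matrix.updateRow_self]
        have hb0 : (b : ℕ) ≠ 0 := fun h => hb (Fin.ext (by simp [h]))
        simp [RL, hb0]
      rw [this]; ring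
    have hv2 : W (Fin.last (m+1)) 0 = -c := by
      rw [hW]
      simp only [Matrix.submatrix_apply, Fin.succAbove_last]
      rw [hD4, Fin.succ_last, Matrix.updateRow_self]
      simp [RL]
    have hZ : W.submatrix (Fin.last (m+1)).succAbove (0 : Fin (m+2)).succAbove = Tm (m+1) := by
      ext i j
      rw [hW, hD4]
      simp only [Matrix.submatrix_apply, Fin.succAbove_last, Fin.succAbove_zero]
      rw [Matrix.updateRow_ne (hne2 i), Matrix.updateRow_ne (Fin.succ_ne_zero _)]
      unfold Tm
      simp only [Fin.val_succ, Fin.coe_castSucc]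
      split_ifs <;> first | rfl | omega | (simp_all; omega) | simp_all
    rw [hv2, hZ, detTm, Fin.val_last, Fin.val_zero]
  rw [hval, hWdet, Fin.val_last]
  have hs : ((-1:Polynomial ℝ)^(m+2)) * ((-1:Polynomial ℝ)^(m+1)) = -1 := by
    rw [← pow_add, show m+2+(m+1) = 2*(m+1)+1 by ring, pow_succ,
      Even.neg_one_pow ⟨m+1, by ring⟩]
    ring
  linear_combination (c^2 * pp (m+1)) * hs

lemma detB : (((Tm (m+3)).updateRow (Fin.last (m+2)) (Tm (m+3) (Fin.last (m+2)) + RL m c)).updateRow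
      0 (Tm (m+3) 0 + R0 m c)).det = pp (m+3) - c^2 * pp (m+1) - 2*c := by
  have h0l : (0 : Fin (m+3)) ≠ Fin.last (m+2) := by
    simp [Fin.ext_iff]
  set inner := (Tm (m+3)).updateRow (Fin.last (m+2)) (Tm (m+3) (Fin.last (m+2)) + RL m c) with hin
  rw [Matrix.det_updateRow_add]
  have h1 : inner.updateRow 0 (Tm (m+3) 0) = inner := by
    conv_lhs => rw [show Tm (m+3) 0 = inner 0 by rw [hin, Matrix.updateRow_ne h0l]]
    exact Matrix.updateRow_eq_self _ _
  have h2 : inner.det = pp (m+3) - c := by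
    rw [hin, Matrix.det_updateRow_add, Matrix.updateRow_eq_self, detTm, detD3]; ring
  have h3 : inner.updateRow 0 (R0 m c) =
      ((Tm (m+3)).updateRow 0 (R0 m c)).updateRow (Fin.last (m+2))
        (Tm (m+3) (Fin.last (m+2)) + RL m c) := by
    rw [hin]
    ext i j
    by_cases e1 : i = 0
    · subst e1
      rw [Matrix.updateRow_self, Matrix.updateRow_ne h0l, Matrix.updateRow_self]
    · by_cases e2 : i = Fin.last (m+2)
      · subst e2
        rw [Matrix.updateRow_ne (Ne.symm h0l), Matrix.updateRow_self, Matrix.updateRow_self]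
      · rw [Matrix.updateRow_ne e1, Matrix.updateRow_ne e2, Matrix.updateRow_ne e2,
          Matrix.updateRow_ne e1]
  have h4 : (inner.updateRow 0 (R0 m c)).det = -c + -(c^2) * pp (m+1) := by
    rw [h3, Matrix.det_updateRow_add]
    have h5 : ((Tm (m+3)).updateRow 0 (R0 m c)).updateRow (Fin.last (m+2))
        (Tm (m+3) (Fin.last (m+2))) = (Tm (m+3)).updateRow 0 (R0 m c) := by
      conv_lhs => rw [show Tm (m+3) (Fin.last (m+2)) =
        ((Tm (m+3)).updateRow 0 (R0 m c)) (Fin.last (m+2)) by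
          rw [Matrix.updateRow_ne (Ne.symm h0l)]]
      exact Matrix.updateRow_eq_self _ _
    rw [h5, detD2, detD4]
  rw [h1, h2, h4]
  ring

end

theorem charpoly_pathAD (n : ℕ) (hn : 3 ≤ n) :
    (pathAD n).charpoly =
      pathPhi n - C (((n : ℝ) - 1) ^ 2) * pathPhi (n - 2) + C (2 * (1 - (n : ℝ))) := by
  obtain ⟨m, rfl⟩ : ∃ m, n = m + 3 := ⟨n - 3, by omega⟩
  have hchar : Matrix.charmatrix (pathAD (m+3)) =
      ((Tm (m+3)).updateRow (Fin.last (m+2))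
          (Tm (m+3) (Fin.last (m+2)) + RL m (C (((m+3 : ℕ) : ℝ) - 1)))).updateRow 0
        (Tm (m+3) 0 + R0 m (C (((m+3 : ℕ) : ℝ) - 1))) := by
    refine Matrix.ext fun i j => ?_
    by_cases hij : i = j
    · subst hij
      rw [Matrix.charmatrix_apply_eq]
      have hdiag : pathAD (m+3) i i = 0 := by
        unfold pathAD
        split_ifs <;> first | rfl | omega | (exfalso; omega)
      rw [hdiag, map_zero, sub_zero]
      rw [Matrix.updateRow_apply, Matrix.updateRow_apply]
      split_ifs with e1 e2
      · subst e1; simp [Tm, R0]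
      · subst e2; simp [Tm, RL, Fin.val_last]
      · simp [Tm]
    · rw [Matrix.charmatrix_apply_ne _ _ _ hij]
      have hv : (i : ℕ) ≠ (j : ℕ) := fun h => hij (Fin.ext h)
      simp only [Matrix.updateRow_apply, Pi.add_apply, Fin.ext_iff, Fin.val_zero, Fin.val_last]
      unfold pathAD Tm R0 RL
      simp only [Fin.val_zero, Fin.val_last]
      split_ifs <;>
        first | rfl | omega | (exfalso; omega) |
          (exfalso; simp_all only [false_or, or_false, false_and, and_false, not_or] <;> omega) |
          (exfalso; simp_all <;> omega) |
          (simp only [map_one, map_zero, neg_zero, zero_add, add_zero])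
  rw [Matrix.charpoly, hchar, detB]
  rw [pathPhi_eq_pp, pathPhi_eq_pp, show (m+3)-2 = m+1 by omega]
  simp only [map_mul, map_sub, map_one, map_pow, map_ofNat]
  ring
end

section
/- The characteristic polynomial of the adjacency-diametrical matrix of the double star S_{n1,n2} is x^{n1+n2−4}·(x^4 − (9n1n2 − 8n1 − 8n2 + 8)x^2 + 4(n1n2 − n1 − n2 + 1)). -/
open Polynomial

set_option synthInstance.maxHeartbeats 1000000
set_option maxHeartbeats 2000000

/-- Vertex set of the double star `S_{n₁,n₂}`: the first component holds the first center and
the `n₁ - 1` pendant vertices attached to it, the second component likewise for `n₂`. -/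
abbrev DoubleStarVerts (n₁ n₂ : ℕ) : Type :=
  (Fin 1 ⊕ Fin (n₁ - 1)) ⊕ (Fin 1 ⊕ Fin (n₂ - 1))

/-- The adjacency-diametrical matrix of the double star `S_{n₁,n₂}` (diameter `3`): entry `1`
between the two centers and between a center and its own pendant vertices, entry `3` between
pendant vertices attached to different centers, `0` otherwise. -/
def doubleStarAD (n₁ n₂ : ℕ) :
    Matrix (DoubleStarVerts n₁ n₂) (DoubleStarVerts n₁ n₂) ℝ := fun a b =>
  match a, b with
  | .inl (.inl _), .inr (.inl _) => 1
  | .inr (.inl _), .inl (.inl _) => 1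
  | .inl (.inl _), .inl (.inr _) => 1
  | .inl (.inr _), .inl (.inl _) => 1
  | .inr (.inl _), .inr (.inr _) => 1
  | .inr (.inr _), .inr (.inl _) => 1
  | .inl (.inr _), .inr (.inr _) => 3
  | .inr (.inr _), .inl (.inr _) => 3
  | _, _ => 0

open Matrix in
lemma charmatrix_map_ratfunc {m : Type*} [Fintype m] [DecidableEq m] {K : Type*} [Field K]
    (M : Matrix m m K) :
    (charmatrix M).map (algebraMap K[X] (RatFunc K)) =
      (algebraMap K[X] (RatFunc K) X) • (1 : Matrix m m (RatFunc K))
        - M.map (algebraMap K (RatFunc K)) := by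
  ext i j
  by_cases h : i = j
  · subst h
    simp [charmatrix_apply_eq, Matrix.one_apply_eq, RatFunc.algebraMap_C, ← RatFunc.algebraMap_C,
      ← IsScalarTower.algebraMap_apply K K[X] (RatFunc K)]
  · simp [charmatrix_apply_ne _ _ _ h, Matrix.one_apply_ne h,
      ← IsScalarTower.algebraMap_apply K K[X] (RatFunc K)]

open Matrix in
lemma charpoly_map_ratfunc {k : Type*} [Fintype k] [DecidableEq k] {K : Type*} [Field K]
    (M : Matrix k k K) :
    algebraMap K[X] (RatFunc K) M.charpoly =
      det ((algebraMap K[X] (RatFunc K) X) • (1 : Matrix k k (RatFunc K))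
        - M.map (algebraMap K (RatFunc K))) := by
  rw [Matrix.charpoly, RingHom.map_det, RingHom.mapMatrix_apply, charmatrix_map_ratfunc]

open Matrix in
lemma charpoly_PQ {m n : Type*} [Fintype m] [Fintype n] [DecidableEq m] [DecidableEq n]
    {K : Type*} [Field K] (P : Matrix m n K) (Q : Matrix n m K)
    (h : Fintype.card n ≤ Fintype.card m) :
    (P * Q).charpoly = X ^ (Fintype.card m - Fintype.card n) * (Q * P).charpoly := by
  set f := algebraMap K[X] (RatFunc K)
  have hinj : Function.Injective f := IsFractionRing.injective K[X] (RatFunc K)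
  apply hinj
  set t : RatFunc K := f X with ht
  have ht0 : t ≠ 0 := by
    simp only [ht, Ne, map_eq_zero_iff f hinj]
    exact X_ne_zero
  rw [_root_.map_mul, map_pow, charpoly_map_ratfunc, charpoly_map_ratfunc]
  set P' := P.map (algebraMap K (RatFunc K))
  set Q' := Q.map (algebraMap K (RatFunc K))
  have hPQ : (P * Q).map (algebraMap K (RatFunc K)) = P' * Q' := Matrix.map_mul
  have hQP : (Q * P).map (algebraMap K (RatFunc K)) = Q' * P' := Matrix.map_mul
  rw [hPQ, hQP]
  have e1 : t • (1 : Matrix m m (RatFunc K)) - P' * Q'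
      = t • ((1 : Matrix m m (RatFunc K)) - (t⁻¹ • P') * Q') := by
    rw [smul_sub, Matrix.smul_mul, smul_smul, mul_inv_cancel₀ ht0, one_smul]
  have e2 : t • (1 : Matrix n n (RatFunc K)) - Q' * P'
      = t • ((1 : Matrix n n (RatFunc K)) - Q' * (t⁻¹ • P')) := by
    rw [smul_sub, Matrix.mul_smul, smul_smul, mul_inv_cancel₀ ht0, one_smul]
  rw [e1, e2, Matrix.det_smul, Matrix.det_smul, det_one_sub_mul_comm,
    ← mul_assoc, ← pow_add, Nat.sub_add_cancel h]

def dsType {n₁ n₂ : ℕ} : DoubleStarVerts n₁ n₂ → Fin 4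
  | .inl (.inl _) => 0
  | .inl (.inr _) => 1
  | .inr (.inl _) => 2
  | .inr (.inr _) => 3

def dsA : Matrix (Fin 4) (Fin 4) ℝ :=
  !![0,1,1,0; 1,0,0,3; 1,0,0,1; 0,3,1,0]

def dsP (n₁ n₂ : ℕ) : Matrix (DoubleStarVerts n₁ n₂) (Fin 4) ℝ :=
  fun v i => if dsType v = i then 1 else 0

def dsQ (n₁ n₂ : ℕ) : Matrix (Fin 4) (DoubleStarVerts n₁ n₂) ℝ :=
  fun i w => dsA i (dsType w)

lemma dsPQ (n₁ n₂ : ℕ) : dsP n₁ n₂ * dsQ n₁ n₂ = doubleStarAD n₁ n₂ := by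
  ext v w
  have : (dsP n₁ n₂ * dsQ n₁ n₂) v w = dsA (dsType v) (dsType w) := by
    simp [Matrix.mul_apply, dsP, dsQ, Finset.sum_ite_eq]
  rw [this]
  rcases v with (v|v)|(v|v) <;> rcases w with (w|w)|(w|w) <;>
    simp [dsA, dsType, doubleStarAD]

lemma dsQP (n₁ n₂ : ℕ) :
    dsQ n₁ n₂ * dsP n₁ n₂ =
      !![0, ((n₁-1 : ℕ) : ℝ), 1, 0;
         1, 0, 0, 3*((n₂-1 : ℕ) : ℝ);
         1, 0, 0, ((n₂-1 : ℕ) : ℝ);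
         0, 3*((n₁-1 : ℕ) : ℝ), 1, 0] := by
  ext i j
  have : (dsQ n₁ n₂ * dsP n₁ n₂) i j
      = ∑ w : DoubleStarVerts n₁ n₂, dsA i (dsType w) * (if dsType w = j then 1 else 0) := by
    simp [Matrix.mul_apply, dsQ, dsP]
  rw [this, Fintype.sum_sum_type, Fintype.sum_sum_type]
  simp only [dsType, Finset.sum_const, Finset.card_univ, Fintype.card_fin, nsmul_eq_mul]
  fin_cases i <;> fin_cases j <;>
    simp [dsA] <;> ring

open Matrix in
lemma charpoly_B (a b : ℝ) :
    (!![0,a,1,0; 1,0,0,3*b; 1,0,0,b; 0,3*a,1,0] : Matrix (Fin 4) (Fin 4) ℝ).charpoly =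
      X^4 - C (9*a*b + a + b + 1) * X^2 + C (4*a*b) := by
  have hcm : charmatrix (!![0,a,1,0; 1,0,0,3*b; 1,0,0,b; 0,3*a,1,0] : Matrix (Fin 4) (Fin 4) ℝ) =
      !![X, -C a, -C 1, 0;
         -C 1, X, 0, -C (3*b);
         -C 1, 0, X, -C b;
         0, -C (3*a), -C 1, X] := by
    ext i j
    fin_cases i <;> fin_cases j <;>
      simp [charmatrix_apply_eq, charmatrix_apply_ne]
  rw [Matrix.charpoly, hcm]
  simp [Matrix.det_succ_row_zero, Fin.sum_univ_succ, Fin.succAbove]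
  apply Polynomial.funext
  intro x
  simp
  ring

theorem charpoly_doubleStarAD (n₁ n₂ : ℕ) (h₁ : 2 ≤ n₁) (h₂ : 2 ≤ n₂) :
    (doubleStarAD n₁ n₂).charpoly =
      X ^ (n₁ + n₂ - 4) *
        (X ^ 4 -
          C (9 * (n₁ : ℝ) * n₂ - 8 * n₁ - 8 * n₂ + 8) * X ^ 2 +
          C (4 * ((n₁ : ℝ) * n₂ - n₁ - n₂ + 1))) := by
  have hcard : Fintype.card (DoubleStarVerts n₁ n₂) = n₁ + n₂ := by
    simp [DoubleStarVerts]
    omega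
  have hle : Fintype.card (Fin 4) ≤ Fintype.card (DoubleStarVerts n₁ n₂) := by
    rw [hcard, Fintype.card_fin]; omega
  have := charpoly_PQ (dsP n₁ n₂) (dsQ n₁ n₂) hle
  rw [dsPQ, dsQP] at this
  rw [this, hcard, Fintype.card_fin, charpoly_B]
  have ha : ((n₁ - 1 : ℕ) : ℝ) = (n₁ : ℝ) - 1 := by
    push_cast [Nat.one_le_iff_ne_zero.mpr (by omega : n₁ ≠ 0)]
    ring
  have hb : ((n₂ - 1 : ℕ) : ℝ) = (n₂ : ℝ) - 1 := by
    push_cast [Nat.one_le_iff_ne_zero.mpr (by omega : n₂ ≠ 0)]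
    ring
  rw [ha, hb]
  congr 2
  · congr 1
    ring
  · congr 1
    ring
end

section
/- For odd n ≥ 3, the determinant of the adjacency-diametrical matrix of the path P_n equals 2(n−1). -/
def pathA (n : ℕ) : Matrix (Fin n) (Fin n) ℝ := fun i j =>
  if i.val + 1 = j.val ∨ j.val + 1 = i.val then 1 else 0

lemma sum_two {n : ℕ} (t : Fin n → ℝ) (j1 j2 : Fin n) (h : j1 ≠ j2)
    (ht : ∀ j, j ≠ j1 → j ≠ j2 → t j = 0) : ∑ j, t j = t j1 + t j2 := by
  have he : ∑ j ∈ ({j1, j2} : Finset (Fin n)), t j = ∑ j, t j :=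
    Finset.sum_subset (Finset.subset_univ _) (by
      intro x _ hx
      simp only [Finset.mem_insert, Finset.mem_singleton, not_or] at hx
      exact ht x hx.1 hx.2)
  rw [← he, Finset.sum_pair h]

lemma det_pathA_odd (n : ℕ) (hn : 1 ≤ n) (ho : Odd n) : (pathA n).det = 0 := by
  rw [← Matrix.exists_mulVec_eq_zero_iff]
  have hn2 : n % 2 = 1 := Nat.odd_iff.mp ho
  refine ⟨fun i => if i.val % 2 = 0 then (-1:ℝ)^(i.val/2) else 0, ?_, ?_⟩
  · intro h
    have := congrFun h ⟨0, by omega⟩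
    simp at this
  · funext i
    show ∑ j, pathA n i j * _ = 0
    rcases Nat.even_or_odd i.val with hi | hi
    · have hi0 : i.val % 2 = 0 := Nat.even_iff.mp hi
      refine Finset.sum_eq_zero fun j _ => ?_
      simp only [pathA]
      split_ifs with h1 h2
      · exfalso; omega
      all_goals ring
    · have hi1 : i.val % 2 = 1 := Nat.odd_iff.mp hi
      have hilt : i.val < n := i.isLt
      have hbound : i.val + 1 < n := by omega
      set j1 : Fin n := ⟨i.val - 1, by omega⟩ with hj1def
      set j2 : Fin n := ⟨i.val + 1, by omega⟩ with hj2def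
      have hv1 : (j1 : ℕ) = i.val - 1 := rfl
      have hv2 : (j2 : ℕ) = i.val + 1 := rfl
      rw [sum_two _ j1 j2 ?_ ?_]
      · show pathA n i j1 * (if (j1:ℕ) % 2 = 0 then (-1:ℝ)^((j1:ℕ)/2) else 0)
          + pathA n i j2 * (if (j2:ℕ) % 2 = 0 then (-1:ℝ)^((j2:ℕ)/2) else 0) = 0
        have e1 : pathA n i j1 = 1 := by
          simp [pathA]
          omega
        have e2 : pathA n i j2 = 1 := by
          simp [pathA, hv2]
        rw [e1, e2, if_pos (show (j1:ℕ) % 2 = 0 by rw [hv1]; omega),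
          if_pos (show (j2:ℕ) % 2 = 0 by rw [hv2]; omega), hv1, hv2]
        have h2 : (i.val + 1) / 2 = (i.val - 1)/2 + 1 := by omega
        rw [h2, pow_succ]; ring
      · simp only [ne_eq, Fin.ext_iff, hv1, hv2]; omega
      · intro j hja hjb
        rw [ne_eq, Fin.ext_iff, hv1] at hja
        rw [ne_eq, Fin.ext_iff, hv2] at hjb
        have := j.isLt
        simp only [pathA]
        rw [if_neg (by omega), zero_mul]

lemma det_B3 (m : ℕ) (hm : 2 ≤ m) (hme : m % 2 = 0) :
    (((pathA (m+1)).updateRow (Fin.last m) (Pi.single 0 1)).updateRow 0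
      (Pi.single (Fin.last m) 1)).det = 0 := by
  rw [← Matrix.exists_mulVec_eq_zero_iff]
  refine ⟨fun i => if i.val % 2 = 1 then (-1:ℝ)^(i.val/2) else 0, ?_, ?_⟩
  · intro h
    have := congrFun h ⟨1, by omega⟩
    simp at this
  · funext i
    simp only [Matrix.mulVec, dotProduct, Pi.zero_apply]
    by_cases hi0 : i = 0
    · subst hi0
      simp only [Matrix.updateRow_self]
      refine Finset.sum_eq_zero fun j _ => ?_
      rcases eq_or_ne j (Fin.last m) with rfl | hj
      · simp [Fin.val_last, hme]
      · simp [Pi.single_eq_of_ne hj]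
    · by_cases hil : i = Fin.last m
      · subst hil
        simp only [Matrix.updateRow_ne hi0, Matrix.updateRow_self]
        refine Finset.sum_eq_zero fun j _ => ?_
        rcases eq_or_ne j 0 with rfl | hj
        · simp
        · simp [Pi.single_eq_of_ne hj]
      · simp only [Matrix.updateRow_ne hi0, Matrix.updateRow_ne hil]
        have hi0' : i.val ≠ 0 := fun h => hi0 (Fin.ext h)
        have hil' : i.val ≠ m := fun h => hil (Fin.ext (by simp [h]))
        have hilt := i.isLt
        rcases Nat.even_or_odd i.val with hi | hi
        · have hie : i.val % 2 = 0 := Nat.even_iff.mp hi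
          set j1 : Fin (m+1) := ⟨i.val - 1, by omega⟩ with hj1def
          set j2 : Fin (m+1) := ⟨i.val + 1, by omega⟩ with hj2def
          have hv1 : (j1 : ℕ) = i.val - 1 := rfl
          have hv2 : (j2 : ℕ) = i.val + 1 := rfl
          rw [sum_two _ j1 j2 ?_ ?_]
          · show pathA (m+1) i j1 * (if (j1:ℕ) % 2 = 1 then (-1:ℝ)^((j1:ℕ)/2) else 0)
              + pathA (m+1) i j2 * (if (j2:ℕ) % 2 = 1 then (-1:ℝ)^((j2:ℕ)/2) else 0) = 0
            have e1 : pathA (m+1) i j1 = 1 := by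
              simp [pathA]
              omega
            have e2 : pathA (m+1) i j2 = 1 := by
              simp [pathA, hv2]
            rw [e1, e2, if_pos (show (j1:ℕ) % 2 = 1 by rw [hv1]; omega),
              if_pos (show (j2:ℕ) % 2 = 1 by rw [hv2]; omega), hv1, hv2]
            have h2 : (i.val + 1) / 2 = (i.val - 1)/2 + 1 := by omega
            rw [h2, pow_succ]; ring
          · simp only [ne_eq, Fin.ext_iff, hv1, hv2]; omega
          · intro j hja hjb
            rw [ne_eq, Fin.ext_iff, hv1] at hja
            rw [ne_eq, Fin.ext_iff, hv2] at hjb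
            have := j.isLt
            simp only [pathA]
            rw [if_neg (by omega), zero_mul]
        · have hio : i.val % 2 = 1 := Nat.odd_iff.mp hi
          refine Finset.sum_eq_zero fun j _ => ?_
          simp only [pathA]
          split_ifs with h1 h2
          · exfalso; omega
          all_goals ring

lemma det_D1 (m : ℕ) (hm : 2 ≤ m) (hme : m % 2 = 0) :
    ((pathA (m+1)).updateRow 0 (Pi.single (Fin.last m) 1)).det = 1 := by
  rw [Matrix.det_succ_row_zero, Finset.sum_eq_single (Fin.last m) ?_ ?_]
  · have hsub : (((pathA (m+1)).updateRow 0 (Pi.single (Fin.last m) 1)).submatrix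
        Fin.succ (Fin.last m).succAbove).det = 1 := by
      rw [Fin.succAbove_last]
      have ht : (((pathA (m+1)).updateRow 0 (Pi.single (Fin.last m) 1)).submatrix
          Fin.succ Fin.castSucc).BlockTriangular id := by
        intro i j hij
        simp only [Matrix.submatrix_apply, Matrix.updateRow_ne (Fin.succ_ne_zero i), pathA]
        rw [if_neg]
        simp only [Fin.val_succ, Fin.coe_castSucc]
        have : (j : ℕ) < (i : ℕ) := hij
        omega
      rw [Matrix.det_of_upperTriangular ht]
      refine Finset.prod_eq_one fun i _ => ?_
      simp [Matrix.updateRow_ne (Fin.succ_ne_zero i), pathA]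
    rw [hsub]
    simp [Matrix.updateRow_self, Fin.val_last, Even.neg_one_pow (Nat.even_iff.mpr hme)]
  · intro j _ hj
    simp [Matrix.updateRow_self, Pi.single_eq_of_ne hj]
  · simp

lemma det_D2 (m : ℕ) (hm : 2 ≤ m) (hme : m % 2 = 0) :
    ((pathA (m+1)).updateRow (Fin.last m) (Pi.single 0 1)).det = 1 := by
  rw [Matrix.det_succ_row _ (Fin.last m), Finset.sum_eq_single 0 ?_ ?_]
  · have hsub : (((pathA (m+1)).updateRow (Fin.last m) (Pi.single 0 1)).submatrix
        (Fin.last m).succAbove (0 : Fin (m+1)).succAbove).det = 1 := by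
      rw [Fin.succAbove_last, Fin.succAbove_zero]
      have ht : (((pathA (m+1)).updateRow (Fin.last m) (Pi.single 0 1)).submatrix
          Fin.castSucc Fin.succ).BlockTriangular OrderDual.toDual := by
        intro i j hij
        have hij' : (i : ℕ) < (j : ℕ) := hij
        simp only [Matrix.submatrix_apply, Matrix.updateRow_ne (Fin.castSucc_lt_last i).ne, pathA]
        rw [if_neg]
        simp only [Fin.val_succ, Fin.coe_castSucc]
        omega
      rw [Matrix.det_of_lowerTriangular _ ht]
      refine Finset.prod_eq_one fun i _ => ?_
      simp [Matrix.updateRow_ne (Fin.castSucc_lt_last i).ne, pathA]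
    rw [hsub]
    simp [Matrix.updateRow_self, Fin.val_last, Even.neg_one_pow (Nat.even_iff.mpr hme)]
  · intro j _ hj
    simp [Matrix.updateRow_self, Pi.single_eq_of_ne hj]
  · simp

/-- For odd `n ≥ 3`, `det(AD(Pₙ)) = 2(n−1)`. -/
theorem det_pathAD_odd (n : ℕ) (hn : 3 ≤ n) (ho : Odd n) :
    (pathAD n).det = 2 * ((n : ℝ) - 1) := by
  obtain ⟨m, rfl⟩ : ∃ m, n = m + 1 := ⟨n - 1, by omega⟩
  have hm : 2 ≤ m := by omega
  have hme : m % 2 = 0 := by have := Nat.odd_iff.mp ho; omega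
  have h0l : (0 : Fin (m+1)) ≠ Fin.last m := by
    simp only [ne_eq, Fin.ext_iff, Fin.val_last, Fin.val_zero]; omega
  set a : ℝ := ((m+1 : ℕ) : ℝ) - 1 with ha
  have hM : pathAD (m+1) =
      ((pathA (m+1)).updateRow 0 (pathA (m+1) 0 + a • (Pi.single (Fin.last m) 1 : Fin (m+1) → ℝ))).updateRow
        (Fin.last m) (pathA (m+1) (Fin.last m) + a • (Pi.single 0 1 : Fin (m+1) → ℝ)) := by
    ext i j
    have hi := i.isLt
    have hj := j.isLt
    simp only [pathAD, pathA, Matrix.updateRow_apply, Pi.add_apply, Pi.smul_apply,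
      Pi.single_apply, smul_eq_mul, Fin.ext_iff, Fin.val_last, Fin.val_zero,
      Nat.add_sub_cancel]
    split_ifs
    all_goals try ring1
    all_goals exfalso
    all_goals try simp only [or_false, false_or] at *
    all_goals omega
  have hswap : (((pathA (m+1)).updateRow 0
        (pathA (m+1) 0 + a • (Pi.single (Fin.last m) 1 : Fin (m+1) → ℝ))).updateRow
        (Fin.last m) (Pi.single 0 1))
      = (((pathA (m+1)).updateRow (Fin.last m) (Pi.single 0 1)).updateRow 0
        (pathA (m+1) 0 + a • (Pi.single (Fin.last m) 1 : Fin (m+1) → ℝ))) := by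
    ext i j
    by_cases hi0 : i = 0
    · subst hi0
      simp only [Matrix.updateRow_ne h0l, Matrix.updateRow_self]
    · by_cases hil : i = Fin.last m
      · subst hil
        simp only [Matrix.updateRow_ne h0l.symm, Matrix.updateRow_self]
      · simp only [Matrix.updateRow_ne hi0, Matrix.updateRow_ne hil]
  rw [hM, Matrix.det_updateRow_add, Matrix.det_updateRow_smul]
  have e1 : (pathA (m+1)).updateRow 0
      (pathA (m+1) 0 + a • (Pi.single (Fin.last m) 1 : Fin (m+1) → ℝ)) (Fin.last m)
      = pathA (m+1) (Fin.last m) := Matrix.updateRow_ne h0l.symm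
  rw [← e1, Matrix.updateRow_eq_self, Matrix.det_updateRow_add, Matrix.det_updateRow_smul,
    Matrix.updateRow_eq_self, hswap, Matrix.det_updateRow_add, Matrix.det_updateRow_smul]
  have e2 : ((pathA (m+1)).updateRow (Fin.last m) (Pi.single 0 1)) 0
      = pathA (m+1) 0 := Matrix.updateRow_ne h0l
  rw [← e2, Matrix.updateRow_eq_self]
  rw [det_pathA_odd (m+1) (by omega) ho, det_D1 m hm hme, det_D2 m hm hme, det_B3 m hm hme]
  push_cast
  ring
end

section
/- For n = 4k with k ≥ 1, the determinant of the adjacency-diametrical matrix of the path P_n equals (n−2)^2; for n = 4k+2 with k ≥ 1, it equals −n^2; and det(AD(P_2)) = −1. -/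
open Matrix




/-- The even-odd "half" block of `pathAD (2*m)`: lower bidiagonal with `1`s and a corner
entry `n - 1` in the top-right. -/
def Bmat (n m : ℕ) : Matrix (Fin m) (Fin m) ℝ := fun i j =>
  if j.val = i.val ∨ j.val + 1 = i.val then 1
  else if i.val = 0 ∧ j.val = m - 1 then (n : ℝ) - 1 else 0

/-- Determinant of an anti-diagonal block matrix (with the lower-left block invertible). -/
lemma det_offdiag {m : Type*} [DecidableEq m] [Fintype m] (B C : Matrix m m ℝ)
    (hC : IsUnit C.det) :
    (Matrix.fromBlocks 0 B C 0).det = (-1) ^ (Fintype.card m) * C.det * B.det := by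
  have : Invertible C := C.invertibleOfIsUnitDet hC
  have h : Matrix.fromBlocks (1 : Matrix m m ℝ) B C 0 =
      Matrix.fromBlocks 1 (⅟C) 0 1 * Matrix.fromBlocks 0 B C 0 := by
    rw [Matrix.fromBlocks_multiply]
    simp
  have h2 := congrArg Matrix.det h
  rw [Matrix.det_mul, Matrix.det_fromBlocks_zero₂₁, Matrix.det_fromBlocks_one₁₁] at h2
  simp only [Matrix.det_one, one_mul, zero_sub, Matrix.det_neg, Matrix.det_mul] at h2
  rw [← h2]; ring

lemma det_Bmat (n m' : ℕ) (hm : 1 ≤ m') :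
    (Bmat n (m' + 1)).det = 1 + (-1) ^ m' * ((n : ℝ) - 1) := by
  have hs1 : ∀ i j : Fin m', ((Bmat n (m' + 1)).submatrix Fin.succ (Fin.succAbove 0)) i j
      = if (j : ℕ) = i ∨ (j : ℕ) + 1 = i then 1 else 0 := by
    intro i j
    simp only [Matrix.submatrix_apply, Fin.zero_succAbove, Bmat, Fin.val_succ]
    split_ifs <;> first | rfl | (exfalso; omega) | simp_all
  have hs2 : ∀ i j : Fin m', ((Bmat n (m' + 1)).submatrix Fin.succ (Fin.succAbove (Fin.last m'))) i j
      = if (j : ℕ) = i + 1 ∨ (j : ℕ) = i then 1 else 0 := by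
    intro i j
    simp only [Matrix.submatrix_apply, Fin.succAbove_last, Bmat, Fin.val_succ, Fin.coe_castSucc]
    split_ifs <;> first | rfl | (exfalso; omega) | simp_all
  rw [Matrix.det_succ_row_zero]
  rw [show (Finset.univ.sum fun j : Fin (m' + 1) => (-1 : ℝ) ^ (j : ℕ) * Bmat n (m' + 1) 0 j *
        ((Bmat n (m' + 1)).submatrix Fin.succ j.succAbove).det) =
      ∑ j ∈ ({0, Fin.last m'} : Finset (Fin (m' + 1))), (-1 : ℝ) ^ (j : ℕ) *
        Bmat n (m' + 1) 0 j * ((Bmat n (m' + 1)).submatrix Fin.succ j.succAbove).det from ?_]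
  · rw [Finset.sum_pair (by
      intro h; have := congrArg Fin.val h; simp [Fin.last] at this; omega)]
    have e1 : Bmat n (m' + 1) 0 0 = 1 := by simp [Bmat]
    have e2 : Bmat n (m' + 1) 0 (Fin.last m') = (n : ℝ) - 1 := by
      simp only [Bmat, Fin.val_last, Fin.val_zero]
      rw [if_neg (by omega), if_pos ⟨trivial, by omega⟩]
    have d1 : ((Bmat n (m' + 1)).submatrix Fin.succ (Fin.succAbove 0)).det = 1 := by
      rw [Matrix.det_of_lowerTriangular _ (by
        intro i j hij
        have hij' : (i : ℕ) < j := hij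
        rw [hs1, if_neg (by omega)])]
      exact Finset.prod_eq_one fun i _ => by rw [hs1, if_pos (Or.inl rfl)]
    have d2 : ((Bmat n (m' + 1)).submatrix Fin.succ (Fin.succAbove (Fin.last m'))).det = 1 := by
      rw [Matrix.det_of_upperTriangular (by
        intro i j hij
        have hij' : (j : ℕ) < i := hij
        rw [hs2, if_neg (by omega)])]
      exact Finset.prod_eq_one fun i _ => by rw [hs2, if_pos (Or.inr rfl)]
    rw [e1, e2, d1, d2]
    simp [Fin.last]
  · symm
    apply Finset.sum_subset (Finset.subset_univ _)
    intro x _ hx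
    simp only [Finset.mem_insert, Finset.mem_singleton] at hx
    push_neg at hx
    have h0 : (x : ℕ) ≠ 0 := fun h => hx.1 (Fin.ext h)
    have hl : (x : ℕ) ≠ m' := fun h => hx.2 (Fin.ext (by simpa [Fin.last] using h))
    have hz : Bmat n (m' + 1) 0 x = 0 := by
      simp only [Bmat, Fin.val_zero]
      rw [if_neg (by omega), if_neg (by simp; omega)]
    rw [hz]; ring

/-- The even-odd reordering of `Fin (2*m)`. -/
def evenOdd (m : ℕ) : Fin m ⊕ Fin m ≃ Fin (2 * m) where
  toFun x := Sum.elim (fun i => ⟨2 * i.val, by omega⟩) (fun j => ⟨2 * j.val + 1, by omega⟩) x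
  invFun k := if h : k.val % 2 = 0 then Sum.inl ⟨k.val / 2, by omega⟩
    else Sum.inr ⟨k.val / 2, by omega⟩
  left_inv := by
    rintro (i | j) <;> dsimp only [Sum.elim_inl, Sum.elim_inr]
    · rw [dif_pos (by omega)]
      exact congrArg Sum.inl (Fin.ext (show 2 * i.val / 2 = i.val by omega))
    · rw [dif_neg (by omega)]
      exact congrArg Sum.inr (Fin.ext (show (2 * j.val + 1) / 2 = j.val by omega))
  right_inv := by
    intro k
    dsimp only
    by_cases h : k.val % 2 = 0
    · rw [dif_pos h]; exact Fin.ext (show 2 * (k.val / 2) = k.val by omega)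
    · rw [dif_neg h]; exact Fin.ext (show 2 * (k.val / 2) + 1 = k.val by omega)

lemma pathAD_submatrix (m : ℕ) (hm : 1 ≤ m) :
    (pathAD (2 * m)).submatrix (evenOdd m) (evenOdd m) =
      Matrix.fromBlocks 0 (Bmat (2 * m) m) (Bmat (2 * m) m)ᵀ 0 := by
  ext x y
  rcases x with i | i <;> rcases y with j | j <;>
    simp only [Matrix.submatrix_apply, evenOdd, Equiv.coe_fn_mk, Sum.elim_inl, Sum.elim_inr,
      Matrix.fromBlocks_apply₁₁, Matrix.fromBlocks_apply₁₂, Matrix.fromBlocks_apply₂₁,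
      Matrix.fromBlocks_apply₂₂, Matrix.transpose_apply, pathAD, Bmat, Matrix.zero_apply] <;>
    split_ifs <;> first | rfl | (exfalso; omega) | (simp_all; intro h; exfalso; omega) | simp_all

lemma det_pathAD_two_mul (m' : ℕ) (hm : 1 ≤ m') :
    (pathAD (2 * (m' + 1))).det =
      (-1) ^ (m' + 1) * (1 + (-1) ^ m' * (((2 * (m' + 1) : ℕ) : ℝ) - 1)) ^ 2 := by
  have hB : (Bmat (2 * (m' + 1)) (m' + 1)).det
      = 1 + (-1) ^ m' * (((2 * (m' + 1) : ℕ) : ℝ) - 1) := det_Bmat _ _ hm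
  have hne : (Bmat (2 * (m' + 1)) (m' + 1)).det ≠ 0 := by
    rw [hB]
    have hc : (1 : ℝ) ≤ (m' : ℝ) := by exact_mod_cast hm
    rcases Nat.even_or_odd m' with he | ho
    · rw [he.neg_one_pow, one_mul]
      push_cast
      intro h; nlinarith
    · rw [ho.neg_one_pow]
      push_cast
      intro h; nlinarith
  have hU : IsUnit ((Bmat (2 * (m' + 1)) (m' + 1))ᵀ).det := by
    rw [Matrix.det_transpose]; exact Ne.isUnit hne
  rw [← Matrix.det_submatrix_equiv_self (evenOdd (m' + 1)), pathAD_submatrix (m' + 1) (by omega),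
    det_offdiag _ _ hU, Matrix.det_transpose, hB]
  rw [Fintype.card_fin]
  ring

/-- `det(AD(Pₙ)) = (n−2)²` if `n = 4k` with `k ≥ 1`, `det(AD(Pₙ)) = −n²` if `n = 4k+2` with
`k ≥ 1`, and `det(AD(P₂)) = −1`. -/
theorem det_pathAD_even :
    (∀ n k : ℕ, 1 ≤ k → n = 4 * k → (pathAD n).det = ((n : ℝ) - 2) ^ 2) ∧
    (∀ n k : ℕ, 1 ≤ k → n = 4 * k + 2 → (pathAD n).det = -(n : ℝ) ^ 2) ∧
    (pathAD 2).det = -1 := by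
  refine ⟨?_, ?_, ?_⟩
  · rintro n k hk rfl
    have h4 : 4 * k = 2 * ((2 * k - 1) + 1) := by omega
    rw [h4, det_pathAD_two_mul (2 * k - 1) (by omega)]
    have hodd : Odd (2 * k - 1) := ⟨k - 1, by omega⟩
    rw [hodd.neg_one_pow]
    have heven : (-1 : ℝ) ^ (2 * k - 1 + 1) = 1 := (even_iff_two_dvd.mpr ⟨k, by omega⟩ : Even (2 * k - 1 + 1)).neg_one_pow
    rw [heven]
    have : ((2 * (2 * k - 1 + 1) : ℕ) : ℝ) = 4 * (k : ℝ) := by push_cast [show 2 * k - 1 + 1 = 2 * k from by omega]; ring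
    rw [this]
    push_cast
    ring
  · rintro n k hk rfl
    have h4 : 4 * k + 2 = 2 * ((2 * k) + 1) := by omega
    rw [h4, det_pathAD_two_mul (2 * k) (by omega)]
    have heven : (-1 : ℝ) ^ (2 * k) = 1 := (even_two_mul k).neg_one_pow
    rw [heven]
    have hodd : (-1 : ℝ) ^ (2 * k + 1) = -1 := (odd_two_mul_add_one k).neg_one_pow
    rw [hodd]
    have : ((2 * (2 * k + 1) : ℕ) : ℝ) = 4 * (k : ℝ) + 2 := by push_cast; ring
    rw [this]
    push_cast
    ring
  · rw [show (pathAD 2).det = pathAD 2 0 0 * pathAD 2 1 1 - pathAD 2 0 1 * pathAD 2 1 0 from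
      Matrix.det_fin_two _]
    norm_num [pathAD]
end

section
/- Let G be a connected graph with n vertices, m edges, and diameter d. Then the largest eigenvalue λ_1 of AD(G) satisfies λ_1 ≤ sqrt(((n−1)/n)·(2m + d^2·d̂(G))). -/
open Finset

/-- The adjacency-diametrical matrix of a graph `G`: entry `1` for pairs at distance `1`,
entry `d` (the diameter) for pairs at distance `d`, and `0` otherwise. -/
noncomputable def ADMatrix {V : Type*} [Fintype V] (G : SimpleGraph V) : Matrix V V ℝ :=
  fun i j =>
    if G.dist i j = 1 then 1
    else if G.dist i j = G.diam then (G.diam : ℝ)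
    else 0

/-- The diametrical degree `d̂(v)`: the number of vertices at distance `diam G` from `v`. -/
noncomputable def diamDegree {V : Type*} [Fintype V] (G : SimpleGraph V) (v : V) : ℕ :=
  (Finset.univ.filter fun u => G.dist v u = G.diam).card

lemma myTrace {V : Type*} [Fintype V] [DecidableEq V] {A : Matrix V V ℝ} (hA : A.IsHermitian) :
    A.trace = ∑ i, hA.eigenvalues i := by
  nth_rewrite 1 [hA.spectral_theorem]
  rw [Unitary.conjStarAlgAut_apply]
  rw [Matrix.trace_mul_cycle, (hA.eigenvectorUnitary).prop.1, Matrix.one_mul,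
    Matrix.trace_diagonal]
  simp

lemma myTraceSq {V : Type*} [Fintype V] [DecidableEq V] {A : Matrix V V ℝ} (hA : A.IsHermitian) :
    (A * A).trace = ∑ i, (hA.eigenvalues i) ^ 2 := by
  have key : ∀ (U D : Matrix V V ℝ), star U * U = 1 →
      (U * D * star U) * (U * D * star U) = U * (D * D) * star U := by
    intro U D h
    calc (U * D * star U) * (U * D * star U)
        = U * D * (star U * U) * D * star U := by noncomm_ring
      _ = U * (D * D) * star U := by rw [h]; noncomm_ring
  have h2 : A * A = (hA.eigenvectorUnitary : Matrix V V ℝ) *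
      (Matrix.diagonal (RCLike.ofReal ∘ hA.eigenvalues) *
        Matrix.diagonal (RCLike.ofReal ∘ hA.eigenvalues)) *
      star (hA.eigenvectorUnitary : Matrix V V ℝ) := by
    conv_lhs => rw [hA.spectral_theorem]
    exact key _ _ (hA.eigenvectorUnitary).prop.1
  rw [h2, Matrix.trace_mul_cycle, (hA.eigenvectorUnitary).prop.1, Matrix.one_mul,
    Matrix.diagonal_mul_diagonal, Matrix.trace_diagonal]
  simp [sq]

lemma myDiagZero {V : Type*} [Fintype V] (G : SimpleGraph V) (i : V) :
    ADMatrix G i i = 0 := by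
  unfold ADMatrix
  rw [SimpleGraph.dist_self]
  rcases eq_or_ne G.diam 0 with h | h
  · simp [h]
  · simp [Ne.symm h]

lemma myEntrySq {V : Type*} [Fintype V] (G : SimpleGraph V) [DecidableRel G.Adj] (i j : V) :
    ADMatrix G i j * ADMatrix G j i ≤
      (if G.Adj i j then (1 : ℝ) else 0) +
        (if G.dist i j = G.diam then (G.diam : ℝ) ^ 2 else 0) := by
  have hd : G.dist j i = G.dist i j := SimpleGraph.dist_comm ..
  have hadj : (if G.Adj i j then (1:ℝ) else 0) = if G.dist i j = 1 then 1 else 0 := by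
    simp [SimpleGraph.dist_eq_one_iff_adj]
  rw [hadj]
  simp only [ADMatrix, hd]
  split_ifs with h1 h2 h2' <;> nlinarith [sq_nonneg ((G.diam : ℝ))]

lemma myTraceBound {V : Type*} [Fintype V] [DecidableEq V] (G : SimpleGraph V)
    [DecidableRel G.Adj] :
    (ADMatrix G * ADMatrix G).trace ≤
      2 * (G.edgeFinset.card : ℝ) + (G.diam : ℝ) ^ 2 * ∑ v, (diamDegree G v : ℝ) := by
  have h1 : (ADMatrix G * ADMatrix G).trace
      = ∑ i, ∑ j, ADMatrix G i j * ADMatrix G j i := by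
    simp [Matrix.trace, Matrix.mul_apply]
  rw [h1]
  have h2 : ∑ i, ∑ j, ADMatrix G i j * ADMatrix G j i ≤
      ∑ i, ∑ j, ((if G.Adj i j then (1 : ℝ) else 0) +
        (if G.dist i j = G.diam then (G.diam : ℝ) ^ 2 else 0)) := by
    apply Finset.sum_le_sum; intro i _; apply Finset.sum_le_sum; intro j _
    exact myEntrySq G i j
  refine h2.trans (le_of_eq ?_)
  have hsplit : ∀ i : V, ∑ j, ((if G.Adj i j then (1 : ℝ) else 0) +
      (if G.dist i j = G.diam then (G.diam : ℝ) ^ 2 else 0)) =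
      (∑ j, (if G.Adj i j then (1:ℝ) else 0)) +
      ∑ j, (if G.dist i j = G.diam then (G.diam : ℝ) ^ 2 else 0) :=
    fun i => Finset.sum_add_distrib
  rw [Finset.sum_congr rfl fun i _ => hsplit i, Finset.sum_add_distrib]
  have hadj : (∑ i : V, ∑ j, (if G.Adj i j then (1:ℝ) else 0)) =
      2 * (G.edgeFinset.card : ℝ) := by
    have hdeg : ∀ i : V, ∑ j, (if G.Adj i j then (1:ℝ) else 0) = (G.degree i : ℝ) := by
      intro i
      rw [Finset.sum_boole, ← SimpleGraph.neighborFinset_eq_filter,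
        SimpleGraph.card_neighborFinset_eq_degree]
    rw [Finset.sum_congr rfl fun i _ => hdeg i, ← Nat.cast_sum,
      SimpleGraph.sum_degrees_eq_twice_card_edges]
    push_cast; ring
  have hdiam : (∑ i : V, ∑ j, (if G.dist i j = G.diam then (G.diam : ℝ) ^ 2 else 0)) =
      (G.diam : ℝ) ^ 2 * ∑ v, (diamDegree G v : ℝ) := by
    rw [Finset.mul_sum]
    refine Finset.sum_congr rfl fun i _ => ?_
    calc ∑ j, (if G.dist i j = G.diam then (G.diam : ℝ) ^ 2 else 0)
        = ∑ j, (G.diam : ℝ) ^ 2 * (if G.dist i j = G.diam then (1:ℝ) else 0) :=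
          Finset.sum_congr rfl fun j _ => by split_ifs <;> ring
      _ = (G.diam : ℝ) ^ 2 * ∑ j, (if G.dist i j = G.diam then (1:ℝ) else 0) :=
          (Finset.mul_sum _ _ _).symm
      _ = (G.diam : ℝ) ^ 2 * (diamDegree G i : ℝ) := by
          rw [Finset.sum_boole]; rfl
  rw [hadj, hdiam]

/-- The largest eigenvalue `λ₁` of `AD(G)` satisfies
`λ₁ ≤ √(((n−1)/n)·(2m + d²·d̂(G)))`. -/
theorem spectral_radius_ADMatrix_le {V : Type*} [Fintype V] [DecidableEq V]
    (G : SimpleGraph V) [DecidableRel G.Adj] (hG : G.Connected)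
    (hA : (ADMatrix G).IsHermitian) :
    (⨆ i, hA.eigenvalues i) ≤
      Real.sqrt ((((Fintype.card V : ℝ) - 1) / (Fintype.card V : ℝ)) *
        (2 * (G.edgeFinset.card : ℝ) + (G.diam : ℝ) ^ 2 * ∑ v, (diamDegree G v : ℝ))) := by
  haveI : Nonempty V := hG.nonempty
  set lam := hA.eigenvalues with hlam
  set t := ⨆ i, lam i with ht
  rcases le_or_gt t 0 with htle | htpos
  · exact htle.trans (Real.sqrt_nonneg _)
  have hsum : ∑ i, lam i = 0 := by
    rw [← myTrace hA]
    simp [Matrix.trace, Matrix.diag, myDiagZero]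
  have hS : ∑ i, (lam i) ^ 2 ≤
      2 * (G.edgeFinset.card : ℝ) + (G.diam : ℝ) ^ 2 * ∑ v, (diamDegree G v : ℝ) := by
    rw [← myTraceSq hA]; exact myTraceBound G
  obtain ⟨i₀, hi₀⟩ : ∃ i, lam i = ⨆ j, lam j := exists_eq_ciSup_of_finite
  have hi₀' : lam i₀ = t := hi₀
  set n : ℕ := Fintype.card V with hn
  have hnpos : (0:ℝ) < n := by exact_mod_cast Fintype.card_pos
  have hcard : ((Finset.univ.erase i₀).card : ℝ) = (n : ℝ) - 1 := by
    rw [Finset.card_erase_of_mem (Finset.mem_univ _), Finset.card_univ]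
    have : 1 ≤ n := Fintype.card_pos
    rw [← hn]
    push_cast [Nat.cast_sub this]
    ring
  have hsplit : t + ∑ i ∈ Finset.univ.erase i₀, lam i = 0 := by
    rw [← hi₀', Finset.add_sum_erase _ (fun i => lam i) (Finset.mem_univ i₀)]
    exact hsum
  have hsplit2 : (lam i₀) ^ 2 + ∑ i ∈ Finset.univ.erase i₀, (lam i) ^ 2
      = ∑ i, (lam i) ^ 2 :=
    Finset.add_sum_erase _ (fun i => lam i ^ 2) (Finset.mem_univ i₀)
  have hCS : (∑ i ∈ Finset.univ.erase i₀, lam i) ^ 2 ≤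
      ((Finset.univ.erase i₀).card : ℝ) * ∑ i ∈ Finset.univ.erase i₀, (lam i) ^ 2 := by
    exact sq_sum_le_card_mul_sum_sq
  have hkey : (n : ℝ) * t ^ 2 ≤ ((n : ℝ) - 1) * ∑ i, (lam i) ^ 2 := by
    rw [hcard] at hCS
    have h1 : (∑ i ∈ Finset.univ.erase i₀, lam i) = -t := by linarith
    have h2 : ∑ i ∈ Finset.univ.erase i₀, (lam i) ^ 2 = (∑ i, (lam i) ^ 2) - t ^ 2 := by
      rw [← hsplit2, hi₀']; ring
    rw [h1, h2] at hCS
    nlinarith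
  have hrhs : (0:ℝ) ≤ (((n:ℝ) - 1) / (n : ℝ)) *
      (2 * (G.edgeFinset.card : ℝ) + (G.diam : ℝ) ^ 2 * ∑ v, (diamDegree G v : ℝ)) := by
    have h1 : (1:ℝ) ≤ n := by exact_mod_cast Fintype.card_pos
    apply mul_nonneg
    · apply div_nonneg <;> linarith
    · positivity
  rw [Real.le_sqrt htpos.le]
  rw [div_mul_eq_mul_div, le_div_iff₀ hnpos]
  calc t ^ 2 * (n : ℝ) = (n : ℝ) * t ^ 2 := by ring
    _ ≤ ((n : ℝ) - 1) * ∑ i, (lam i) ^ 2 := hkey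
    _ ≤ ((n : ℝ) - 1) * (2 * (G.edgeFinset.card : ℝ) +
        (G.diam : ℝ) ^ 2 * ∑ v, (diamDegree G v : ℝ)) := by
      apply mul_le_mul_of_nonneg_left hS
      have : (1:ℝ) ≤ n := by exact_mod_cast Fintype.card_pos
      linarith
  exact hrhs
end

section
/- Let G be a connected graph with at least one edge and let λ_1 ≥ ... ≥ λ_n be the eigenvalues of AD(G). If the vertices of G can be properly colored with χ colors such that additionally no two vertices at distance equal to the diameter receive the same color, and χ_AD(G) is the minimum such number of colors, then χ_AD(G) ≥ 1 − λ_1/λ_n. -/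
open Finset

/-- The graph on `V(G)` whose edges are the pairs of vertices at distance `1` or at distance
`diam G` in `G`; its proper colorings are exactly the AD-colorings of `G`. -/
def ADGraph {V : Type*} [Fintype V] (G : SimpleGraph V) : SimpleGraph V :=
  SimpleGraph.fromRel (fun u v => G.dist u v = 1 ∨ G.dist u v = G.diam)

section aux

open Matrix

variable {n : Type*} [Fintype n] [DecidableEq n]

/-- Rayleigh-quotient bounds for a real symmetric matrix. -/
lemma AD_quad_bounds {A : Matrix n n ℝ} (hA : A.IsHermitian) (y : n → ℝ) :
    (⨅ i, hA.eigenvalues i) * (y ⬝ᵥ y) ≤ y ⬝ᵥ (A *ᵥ y) ∧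
      y ⬝ᵥ (A *ᵥ y) ≤ (⨆ i, hA.eigenvalues i) * (y ⬝ᵥ y) := by
  set U : Matrix n n ℝ := (hA.eigenvectorUnitary : Matrix n n ℝ) with hUdef
  have hU1 : U * star U = 1 := (Matrix.mem_unitaryGroup_iff).mp hA.eigenvectorUnitary.2
  set z : n → ℝ := y ᵥ* U with hz
  have hstar : star U = Uᵀ := by
    rw [Matrix.star_eq_conjTranspose, Matrix.conjTranspose_eq_transpose_of_trivial]
  have hco : ((RCLike.ofReal ∘ hA.eigenvalues) : n → ℝ) = hA.eigenvalues := by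
    ext i; simp
  have h1 : y ⬝ᵥ (A *ᵥ y) = ∑ i, hA.eigenvalues i * (z i) ^ 2 := by
    conv_lhs => rw [hA.spectral_theorem, Unitary.conjStarAlgAut_apply]
    rw [← Matrix.mulVec_mulVec, ← Matrix.mulVec_mulVec, Matrix.dotProduct_mulVec,
      hstar, Matrix.mulVec_transpose, ← hz]
    simp only [hco, dotProduct, Matrix.mulVec_diagonal]
    apply Finset.sum_congr rfl
    intro i _
    ring
  have h2 : y ⬝ᵥ y = ∑ i, (z i) ^ 2 := by
    have : z ⬝ᵥ (star U *ᵥ y) = y ⬝ᵥ y := by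
      rw [Matrix.dotProduct_mulVec, hz, Matrix.vecMul_vecMul, hU1, Matrix.vecMul_one]
    rw [← this, hstar, Matrix.mulVec_transpose, ← hz]
    simp [dotProduct, sq]
  constructor
  · rw [h1, h2, Finset.mul_sum]
    apply Finset.sum_le_sum
    intro i _
    exact mul_le_mul_of_nonneg_right
      (ciInf_le (Set.Finite.bddBelow (Set.finite_range _)) i) (sq_nonneg _)
  · rw [h1, h2, Finset.mul_sum]
    apply Finset.sum_le_sum
    intro i _
    exact mul_le_mul_of_nonneg_right
      (le_ciSup (Set.Finite.bddAbove (Set.finite_range _)) i) (sq_nonneg _)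

/-- A real symmetric matrix has a unit eigenvector for its largest eigenvalue. -/
lemma AD_exists_top_eigenvector [Nonempty n] {A : Matrix n n ℝ} (hA : A.IsHermitian) :
    ∃ x : n → ℝ, A *ᵥ x = (⨆ i, hA.eigenvalues i) • x ∧ x ⬝ᵥ x = 1 := by
  obtain ⟨i, hi⟩ := exists_eq_ciSup_of_finite (f := hA.eigenvalues)
  refine ⟨⇑(hA.eigenvectorBasis i), ?_, ?_⟩
  · rw [hA.mulVec_eigenvectorBasis, hi]
  · have h := orthonormal_iff_ite.mp hA.eigenvectorBasis.orthonormal i i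
    rw [EuclideanSpace.inner_eq_star_dotProduct] at h
    simpa using h

end aux

section pieces
variable {V : Type*} [Fintype V] [DecidableEq V] (G : SimpleGraph V)

lemma ADMatrix_diag (u : V) : ADMatrix G u u = 0 := by
  unfold ADMatrix
  simp only [SimpleGraph.dist_self]
  rw [if_neg (by norm_num : ¬ (0:ℕ) = 1)]
  by_cases h : 0 = G.diam
  · rw [if_pos h, ← h]; norm_num
  · rw [if_neg h]

lemma ADMatrix_same_color {χ : ℕ} (C : (ADGraph G).Coloring (Fin χ)) {u v : V}
    (h : C u = C v) : ADMatrix G u v = 0 := by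
  rcases eq_or_ne u v with rfl | hne
  · exact ADMatrix_diag G u
  have hnadj : ¬ (ADGraph G).Adj u v := fun hadj => C.valid hadj h
  rw [ADGraph, SimpleGraph.fromRel_adj] at hnadj
  push_neg at hnadj
  have h2 := hnadj hne
  unfold ADMatrix
  split_ifs with h1 h3
  · exact absurd h1 h2.1.1
  · exact absurd h3 h2.1.2
  · rfl

end pieces

/-- Hoffman-type bound for the AD-chromatic number: `χ_AD(G) ≥ 1 − λ₁/λₙ`. -/
theorem ADChromaticNumber_ge {V : Type*} [Fintype V] [DecidableEq V] [Nonempty V]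
    (G : SimpleGraph V) (hG : G.Connected) (hE : G.edgeSet.Nonempty)
    (hA : (ADMatrix G).IsHermitian) (χ : ℕ)
    (hχ : (ADGraph G).chromaticNumber = χ) :
    1 - (⨆ i, hA.eigenvalues i) / (⨅ i, hA.eigenvalues i) ≤ (χ : ℝ) := by
  classical
  open Matrix in
  set A : Matrix V V ℝ := ADMatrix G with hAdef
  set S : ℝ := ⨆ i, hA.eigenvalues i with hS
  set I : ℝ := ⨅ i, hA.eigenvalues i with hI
  -- the coloring
  have hcol : (ADGraph G).Colorable χ :=
    (SimpleGraph.chromaticNumber_le_iff_colorable).mp (le_of_eq hχ)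
  obtain ⟨C⟩ := hcol
  -- χ ≥ 1
  have hχpos : 0 < χ := (C (Classical.arbitrary V)).pos
  -- I ≤ -1 < 0, using an edge of G
  have hIneg : I ≤ -1 := by
    obtain ⟨e, he⟩ := hE
    induction e using Sym2.ind with
    | _ u v =>
      rw [SimpleGraph.mem_edgeSet] at he
      have hne : u ≠ v := he.ne
      have huv : A u v = 1 := by
        rw [hAdef]; unfold ADMatrix
        rw [if_pos (SimpleGraph.dist_eq_one_iff_adj.mpr he)]
      have hvu : A v u = 1 := by
        rw [hAdef]; unfold ADMatrix
        rw [if_pos (SimpleGraph.dist_eq_one_iff_adj.mpr he.symm)]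
      set t : V → ℝ := Pi.single u 1 - Pi.single v 1 with ht
      have hq := (AD_quad_bounds hA t).1
      have h1 : t ⬝ᵥ (A *ᵥ t) = -2 := by
        rw [ht, Matrix.mulVec_sub, sub_dotProduct, dotProduct_sub,
          dotProduct_sub, Matrix.mulVec_single, Matrix.mulVec_single]
        simp only [single_dotProduct, mul_one, one_mul, MulOpposite.op_one, one_smul,
          Matrix.col_apply]
        have hduu : A u u = 0 := ADMatrix_diag G u
        have hdvv : A v v = 0 := ADMatrix_diag G v
        rw [hduu, hdvv, huv, hvu]
        ring
      have h2 : t ⬝ᵥ t = 2 := by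
        rw [ht, sub_dotProduct, dotProduct_sub, dotProduct_sub]
        simp only [single_dotProduct, dotProduct_single, mul_one, one_mul]
        rw [Pi.single_eq_same, Pi.single_eq_same, Pi.single_eq_of_ne hne,
          Pi.single_eq_of_ne (Ne.symm hne)]
        ring
      rw [h1, h2, ← hI] at hq
      linarith
  have hI0 : I < 0 := lt_of_le_of_lt hIneg (by norm_num)
  -- the top eigenvector
  obtain ⟨x, hAx, hx1⟩ := AD_exists_top_eigenvector hA
  rw [← hS] at hAx
  -- the decomposition by color classes
  set w : Fin χ → V → ℝ := fun c v => if C v = c then x v else 0 with hw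
  set m : Fin χ → ℝ := fun c => w c ⬝ᵥ w c with hm
  have hwx : ∀ c, w c ⬝ᵥ x = m c := by
    intro c
    apply Finset.sum_congr rfl
    intro u _
    by_cases h : C u = c <;> simp [hw, h]
  have hxw : ∀ c, x ⬝ᵥ w c = m c := by
    intro c; rw [dotProduct_comm]; exact hwx c
  have hsum_m : ∑ c, m c = 1 := by
    have h1 : ∑ c, m c = ∑ u, ∑ c : Fin χ, w c u * w c u := by
      rw [Finset.sum_comm]; rfl
    have h2 : x ⬝ᵥ x = ∑ u, x u * x u := rfl
    rw [h1, ← hx1, h2]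
    apply Finset.sum_congr rfl
    intro u _
    rw [Finset.sum_eq_single (C u)]
    · simp [hw]
    · intro c _ hc; simp [hw, if_neg (Ne.symm hc)]
    · intro h; exact absurd (Finset.mem_univ _) h
  have hwAw : ∀ c, w c ⬝ᵥ (A *ᵥ w c) = 0 := by
    intro c
    apply Finset.sum_eq_zero
    intro u _
    rcases eq_or_ne (C u) c with hu | hu
    · have : (A *ᵥ w c) u = 0 := by
        apply Finset.sum_eq_zero
        intro v _
        rcases eq_or_ne (C v) c with hv | hv
        · show ADMatrix G u v * w c v = 0
          rw [ADMatrix_same_color G C (hu.trans hv.symm), zero_mul]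
        · simp [hw, hv]
      rw [this, mul_zero]
    · simp [hw, hu]
  have hxAx : x ⬝ᵥ (A *ᵥ x) = S := by
    rw [hAx, dotProduct_smul, hx1, smul_eq_mul, mul_one]
  have hwAx : ∀ c, w c ⬝ᵥ (A *ᵥ x) = S * m c := by
    intro c; rw [hAx, dotProduct_smul, hwx, smul_eq_mul]
  have hxA : x ᵥ* A = S • x := by
    rw [← Matrix.mulVec_transpose]
    have : Aᵀ = A := by
      have := hA
      rwa [Matrix.IsHermitian, Matrix.conjTranspose_eq_transpose_of_trivial] at this
    rw [this, hAx]
  have hxAw : ∀ c, x ⬝ᵥ (A *ᵥ w c) = S * m c := by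
    intro c
    rw [Matrix.dotProduct_mulVec, hxA, smul_dotProduct, hxw, smul_eq_mul]
  -- Rayleigh bound applied to x - χ • w c
  have key : ∀ c : Fin χ, I * (1 - 2 * χ * m c + χ * χ * m c) ≤ S - 2 * χ * S * m c := by
    intro c
    set y : V → ℝ := x - (χ : ℝ) • w c with hy
    have hq := (AD_quad_bounds hA y).1
    rw [← hI] at hq
    have hyy : y ⬝ᵥ y = 1 - 2 * χ * m c + χ * χ * m c := by
      simp only [hy, sub_dotProduct, dotProduct_sub,
        smul_dotProduct, dotProduct_smul, smul_eq_mul,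
        hx1, hxw c, hwx c]
      have hmc : w c ⬝ᵥ w c = m c := rfl
      rw [hmc]
      ring
    have hyAy : y ⬝ᵥ (A *ᵥ y) = S - 2 * χ * S * m c := by
      simp only [hy, Matrix.mulVec_sub, Matrix.mulVec_smul, sub_dotProduct,
        dotProduct_sub, smul_dotProduct, dotProduct_smul,
        smul_eq_mul, hxAx, hxAw c, hwAx c, hwAw c]
      ring
    rw [hyy, hyAy] at hq
    exact hq
  -- sum the inequalities over all colors
  have hsum : ∑ c : Fin χ, (I * (1 - 2 * χ * m c + χ * χ * m c)) ≤
      ∑ c : Fin χ, (S - 2 * χ * S * m c) :=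
    Finset.sum_le_sum fun c _ => key c
  have hlhs : ∑ c : Fin χ, (I * (1 - 2 * χ * m c + χ * χ * m c)) =
      χ * I + (I * χ * χ - 2 * I * χ) := by
    have : ∀ c : Fin χ, I * (1 - 2 * χ * m c + χ * χ * m c) =
        I + (I * χ * χ - 2 * I * χ) * m c := by intro c; ring
    rw [Finset.sum_congr rfl fun c _ => this c, Finset.sum_add_distrib,
      Finset.sum_const, ← Finset.mul_sum, hsum_m, mul_one, Finset.card_univ,
      Fintype.card_fin, nsmul_eq_mul]
  have hrhs : ∑ c : Fin χ, (S - 2 * χ * S * m c) = χ * S - 2 * χ * S := by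
    rw [Finset.sum_sub_distrib, Finset.sum_const, ← Finset.mul_sum, hsum_m, mul_one,
      Finset.card_univ, Fintype.card_fin, nsmul_eq_mul]
  rw [hlhs, hrhs] at hsum
  -- conclude
  have hχR : (1 : ℝ) ≤ χ := by exact_mod_cast hχpos
  have hdiv : I * ((χ : ℝ) - 1) ≤ -S := by
    have hχ0 : (0 : ℝ) < χ := by exact_mod_cast hχpos
    have : I * ((χ : ℝ) - 1) * χ ≤ -S * χ := by nlinarith [hsum]
    exact le_of_mul_le_mul_right this hχ0
  have h2 : -S / I ≤ (χ : ℝ) - 1 := by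
    rw [div_le_iff_of_neg hI0]
    linarith [hdiv]
  have h3 : -S / I = -(S / I) := by rw [neg_div]
  linarith [h2, h3 ▸ h2]
end

section
/- Let G be a connected graph on n vertices, and let n^+ and n^− denote the number of positive and negative eigenvalues of AD(G), respectively. If S is a set of vertices of G such that no two vertices of S are adjacent and no two vertices of S are at distance equal to the diameter d, then |S| ≤ min{n − n^+, n − n^−}. -/
open Finset

section Aux

variable {V : Type*} [Fintype V] [DecidableEq V]

lemma aux_inner_eq_sum (A : Matrix V V ℝ) (hA : A.IsHermitian) (x : EuclideanSpace ℝ V) :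
    inner (𝕜 := ℝ) x (Matrix.toEuclideanLin A x) =
      ∑ j, hA.eigenvalues j * hA.eigenvectorBasis.repr x j ^ 2 := by
  set B := hA.eigenvectorBasis with hB
  have hsym : (Matrix.toEuclideanLin A).IsSymmetric := Matrix.isHermitian_iff_isSymmetric.mp hA
  have key1 : ∀ j, Matrix.toEuclideanLin A (B j) = hA.eigenvalues j • B j := by
    intro j
    apply (WithLp.equiv 2 (V → ℝ)).injective
    ext i
    have := congrFun (hA.mulVec_eigenvectorBasis j) i
    simpa [Matrix.toEuclideanLin_apply] using this
  have key2 : ∀ j, B.repr (Matrix.toEuclideanLin A x) j = hA.eigenvalues j * B.repr x j := by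
    intro j
    rw [B.repr_apply_apply, B.repr_apply_apply, ← hsym (B j) x, key1,
      real_inner_smul_left]
  rw [← B.repr.inner_map_map x (Matrix.toEuclideanLin A x)]
  rw [PiLp.inner_apply]
  refine Finset.sum_congr rfl fun j _ => ?_
  rw [key2]
  simp [OrthonormalBasis.repr]
  ring

lemma aux_card (A : Matrix V V ℝ) (hA : A.IsHermitian)
    (S : Finset V) (hS0 : ∀ u ∈ S, ∀ v ∈ S, A u v = 0) (σ : ℝ) :
    S.card ≤ Fintype.card V -
      (Finset.univ.filter fun i => 0 < σ * hA.eigenvalues i).card := by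
  classical
  set B := hA.eigenvectorBasis with hB
  set pos : Finset V := Finset.univ.filter fun i => 0 < σ * hA.eigenvalues i with hpos
  set W : Submodule ℝ (EuclideanSpace ℝ V) :=
    Submodule.span ℝ (Set.range fun i : pos => B i) with hW
  set U : Submodule ℝ (EuclideanSpace ℝ V) :=
    Submodule.span ℝ (Set.range fun u : S => EuclideanSpace.single (u : V) (1 : ℝ)) with hUdef
  -- finranks
  have liB : LinearIndependent ℝ (fun i : pos => B i) :=
    B.orthonormal.linearIndependent.comp _ Subtype.val_injective
  have hrW : Module.finrank ℝ W = pos.card := by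
    rw [hW, finrank_span_eq_card liB, Fintype.card_coe]
  have liU : LinearIndependent ℝ (fun u : S => EuclideanSpace.single (u : V) (1 : ℝ)) := by
    have := (EuclideanSpace.basisFun V ℝ).orthonormal.linearIndependent.comp
      (fun u : S => (u : V)) Subtype.val_injective
    simpa only [Function.comp_def, EuclideanSpace.basisFun_apply] using this
  have hrU : Module.finrank ℝ U = S.card := by
    rw [hUdef, finrank_span_eq_card liU, Fintype.card_coe]
  -- membership in U: supported on S
  have hUsupp : ∀ x ∈ U, ∀ v, v ∉ S → x v = 0 := by
    intro x hx
    induction hx using Submodule.span_induction with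
    | mem y hy =>
      obtain ⟨u, rfl⟩ := hy
      intro v hv
      have hne : v ≠ (u : V) := fun h => hv (h ▸ u.2)
      show EuclideanSpace.single (u : V) (1 : ℝ) v = 0
      rw [EuclideanSpace.single_apply]
      simp [hne]
    | zero => intro v _; rfl
    | add y z _ _ hy hz => intro v hv; have := hy v hv; have := hz v hv
                           show y v + z v = 0; simp_all
    | smul c y _ hy => intro v hv; show c * y v = 0; simp [hy v hv]
  -- membership in W: repr supported on pos
  have hWsupp : ∀ x ∈ W, ∀ j, j ∉ pos → B.repr x j = 0 := by
    intro x hx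
    induction hx using Submodule.span_induction with
    | mem y hy =>
      obtain ⟨⟨i, hi⟩, rfl⟩ := hy
      intro j hj
      rw [B.repr_apply_apply]
      exact B.orthonormal.2 (fun h : j = i => hj (h ▸ hi))
    | zero => intro j _; simp
    | add y z _ _ hy hz => intro j hj; rw [map_add]; simp [hy j hj, hz j hj]
    | smul c y _ hy => intro j hj; rw [map_smul]; simp [hy j hj]
  -- intersection trivial
  have hinf : W ⊓ U = ⊥ := by
    rw [Submodule.eq_bot_iff]
    rintro x ⟨hxW, hxU⟩
    have hq : inner (𝕜 := ℝ) x (Matrix.toEuclideanLin A x) = 0 := by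
      rw [PiLp.inner_apply]
      refine Finset.sum_eq_zero fun i _ => ?_
      by_cases hxi : x i = 0
      · simp [hxi]
      · have hiS : i ∈ S := by by_contra h; exact hxi (hUsupp x hxU i h)
        have : (Matrix.toEuclideanLin A x) i = 0 := by
          rw [Matrix.toEuclideanLin_apply]
          show Matrix.mulVec A _ i = 0
          rw [Matrix.mulVec]
          refine Finset.sum_eq_zero fun j _ => ?_
          by_cases hxj : (WithLp.equiv 2 (V → ℝ) x) j = 0
          · simp [dotProduct, show x.ofLp j = 0 from hxj]
          · have hjS : j ∈ S := by by_contra h; exact hxj (hUsupp x hxU j h)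
            simp [dotProduct, hS0 i hiS j hjS]
        simp [this]
    rw [aux_inner_eq_sum A hA x] at hq
    have hterm : ∀ j ∈ Finset.univ (α := V),
        0 ≤ σ * (hA.eigenvalues j * B.repr x j ^ 2) := by
      intro j _
      by_cases hj : j ∈ pos
      · have : 0 < σ * hA.eigenvalues j := by
          simpa [hpos] using (Finset.mem_filter.mp hj).2
        nlinarith [sq_nonneg (B.repr x j)]
      · rw [hWsupp x hxW j hj]; ring_nf; simp
    have hsum0 : ∑ j, σ * (hA.eigenvalues j * B.repr x j ^ 2) = 0 := by
      rw [← Finset.mul_sum, hq, mul_zero]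
    have hall := (Finset.sum_eq_zero_iff_of_nonneg hterm).mp hsum0
    have hrepr0 : ∀ j, B.repr x j = 0 := by
      intro j
      by_cases hj : j ∈ pos
      · have hpj : 0 < σ * hA.eigenvalues j := by
          simpa [hpos] using (Finset.mem_filter.mp hj).2
        have h0 := hall j (Finset.mem_univ j)
        have hc2 : (σ * hA.eigenvalues j) * (B.repr x j ^ 2) = 0 := by linear_combination h0
        rcases mul_eq_zero.mp hc2 with h | h
        · exact absurd h (ne_of_gt hpj)
        · exact pow_eq_zero_iff two_ne_zero |>.mp h
      · exact hWsupp x hxW j hj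
    have h0 : B.repr x = 0 := by ext j; exact hrepr0 j
    exact B.repr.map_eq_zero_iff.mp h0
  have hfin := Submodule.finrank_sup_add_finrank_inf_eq W U
  rw [hinf] at hfin
  simp only [finrank_bot, add_zero] at hfin
  have hle : Module.finrank ℝ ↥(W ⊔ U) ≤ Fintype.card V := by
    have := Submodule.finrank_le (W ⊔ U)
    rwa [finrank_euclideanSpace] at this
  have : pos.card + S.card ≤ Fintype.card V := by
    rw [← hrW, ← hrU, ← hfin]; exact hle
  omega

end Aux

/-- If `S` is a set of vertices no two of which are adjacent and no two of which are at
distance equal to the diameter, then `|S| ≤ min{n − n⁺, n − n⁻}`, where `n⁺` and `n⁻` are the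
numbers of positive and negative eigenvalues of `AD(G)`. -/
theorem ADIndependent_card_le {V : Type*} [Fintype V] [DecidableEq V]
    (G : SimpleGraph V) (hG : G.Connected)
    (hA : (ADMatrix G).IsHermitian)
    (S : Finset V)
    (hS : ∀ u ∈ S, ∀ v ∈ S, u ≠ v → ¬G.Adj u v ∧ G.dist u v ≠ G.diam) :
    S.card ≤
      min (Fintype.card V - (Finset.univ.filter fun i => 0 < hA.eigenvalues i).card)
          (Fintype.card V - (Finset.univ.filter fun i => hA.eigenvalues i < 0).card) := by
  have hS0 : ∀ u ∈ S, ∀ v ∈ S, ADMatrix G u v = 0 := by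
    intro u hu v hv
    by_cases huv : u = v
    · subst huv
      simp only [ADMatrix, SimpleGraph.dist_self]
      split
      · omega
      · split
        · rename_i h; rw [← h]; simp
        · rfl
    · obtain ⟨hadj, hdiam⟩ := hS u hu v hv huv
      have h1 : G.dist u v ≠ 1 := fun h => hadj (SimpleGraph.dist_eq_one_iff_adj.mp h)
      simp [ADMatrix, h1, hdiam]
  refine le_min ?_ ?_
  · have := aux_card (ADMatrix G) hA S hS0 1
    simpa using this
  · have := aux_card (ADMatrix G) hA S hS0 (-1)
    have he : (Finset.univ.filter fun i => 0 < (-1 : ℝ) * hA.eigenvalues i) =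
        (Finset.univ.filter fun i => hA.eigenvalues i < 0) := by
      apply Finset.filter_congr; intro i _
      constructor
      · intro h; nlinarith
      · intro h; nlinarith
    rwa [he] at this
end

section
/- Let G be a connected graph on n vertices with AD matrix AD(G), and let H be an r-regular graph on m vertices. Suppose the lexicographic product G[H] has diameter greater than 2, every vertex of G has a vertex at distance ≥ 2 in G (so that copies of H contribute only adjacency entries), and X is an eigenvector of A(H) with eigenvalue μ ≠ r orthogonal to the all-ones vector. Then for any vector Y ∈ R^n, the vector Y ⊗ X is an eigenvector of AD(G[H]) with eigenvalue μ; hence each such eigenvalue μ of A(H) occurs with multiplicity at least n in the spectrum of AD(G[H]). -/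
open Finset SimpleGraph

/-- The lexicographic product `G[H]`: `(u₁, v₁) ~ (u₂, v₂)` iff `u₁ ~ u₂` in `G`, or
`u₁ = u₂` and `v₁ ~ v₂` in `H`. -/
def lexProd {V W : Type*} (G : SimpleGraph V) (H : SimpleGraph W) : SimpleGraph (V × W) where
  Adj a b := G.Adj a.1 b.1 ∨ (a.1 = b.1 ∧ H.Adj a.2 b.2)
  symm := by
    constructor
    rintro a b (h | ⟨h₁, h₂⟩)
    · exact Or.inl h.symm
    · exact Or.inr ⟨h₁.symm, h₂.symm⟩
  loopless := by
    constructor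
    rintro a (h | ⟨_, h⟩)
    · exact G.irrefl h
    · exact H.irrefl h

/-- Lift a walk in `G` to a walk in `lexProd G H` with constant second coordinate. -/
def liftWalk {V W : Type*} {G : SimpleGraph V} {H : SimpleGraph W} (c : W) :
    ∀ {u v : V}, G.Walk u v → (lexProd G H).Walk (u, c) (v, c)
  | _, _, SimpleGraph.Walk.nil => SimpleGraph.Walk.nil
  | _, _, SimpleGraph.Walk.cons h q => SimpleGraph.Walk.cons (Or.inl h) (liftWalk c q)

lemma liftWalk_length {V W : Type*} {G : SimpleGraph V} {H : SimpleGraph W} (c : W)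
    {u v : V} (p : G.Walk u v) : (liftWalk (H := H) c p).length = p.length := by
  induction p with
  | nil => rfl
  | cons h q ih => exact congrArg Nat.succ ih

/-- Projecting a lex walk: its length bounds the `G`-distance of the first coordinates. -/
lemma dist_fst_le_length {V W : Type*} {G : SimpleGraph V} {H : SimpleGraph W}
    (hG : G.Connected) {p q : V × W} (w : (lexProd G H).Walk p q) :
    G.dist p.1 q.1 ≤ w.length := by
  induction w with
  | nil => simp
  | @cons a b c h t ih =>
    rcases h with h | ⟨h, _⟩
    · have h1 : G.dist a.1 b.1 ≤ 1 :=
        by simpa using SimpleGraph.dist_le (SimpleGraph.Walk.cons h SimpleGraph.Walk.nil)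
      have := hG.dist_triangle (u := a.1) (v := b.1) (w := c.1)
      show G.dist a.1 c.1 ≤ t.length + 1
      omega
    · calc G.dist a.1 c.1 = G.dist b.1 c.1 := by rw [h]
        _ ≤ t.length := ih
        _ ≤ _ := Nat.le_succ _

lemma lex_dist_of_ne {V W : Type*} {G : SimpleGraph V} {H : SimpleGraph W}
    (hG : G.Connected) {u v : V} (huv : u ≠ v) (a b : W) :
    (lexProd G H).dist (u, a) (v, b) = G.dist u v := by
  -- the lifted walk realizing G.dist u v
  obtain ⟨p, hp⟩ := (hG u v).exists_walk_length_eq_dist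
  cases p with
  | nil => exact absurd rfl huv
  | @cons _ x _ h q =>
    have hadj : (lexProd G H).Adj (u, a) (x, b) := Or.inl h
    have hw : (SimpleGraph.Walk.cons hadj (liftWalk b q)).length = G.dist u v := by
      simpa [liftWalk_length] using hp
    apply le_antisymm
    · exact le_of_le_of_eq
        (SimpleGraph.dist_le (SimpleGraph.Walk.cons hadj (liftWalk b q))) hw
    · have hreach : (lexProd G H).Reachable (u, a) (v, b) := ⟨SimpleGraph.Walk.cons hadj (liftWalk b q)⟩
      obtain ⟨w, hwl⟩ := hreach.exists_walk_length_eq_dist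
      calc G.dist u v ≤ w.length := dist_fst_le_length hG w
        _ = _ := hwl

/-- For the lexicographic product `G[H]` of diameter `> 2`, with `H` an `r`-regular graph and
every vertex of `G` having some vertex at distance `≥ 2`, every eigenvector `X` of `A(H)` with
eigenvalue `μ ≠ r` orthogonal to the all-ones vector gives, for each `Y : V → ℝ`, an
eigenvector `Y ⊗ X` of `AD(G[H])` with eigenvalue `μ`. -/
theorem ADMatrix_lexProd_eigenvector {V W : Type*} [Fintype V] [Fintype W]
    (G : SimpleGraph V) (H : SimpleGraph W) [DecidableRel H.Adj]
    (hG : G.Connected) (r : ℕ) (hreg : ∀ w, H.degree w = r)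
    (hdiam : 2 < (lexProd G H).diam)
    (hfar : ∀ u : V, ∃ v : V, 2 ≤ G.dist u v)
    (X : W → ℝ) (mu : ℝ) (hmu : mu ≠ (r : ℝ))
    (hX : (H.adjMatrix ℝ).mulVec X = mu • X)
    (horth : ∑ w, X w = 0) :
    ∀ Y : V → ℝ,
      (ADMatrix (lexProd G H)).mulVec (fun p => Y p.1 * X p.2) =
        mu • (fun p => Y p.1 * X p.2) := by
  intro Y
  funext p
  obtain ⟨u, a⟩ := p
  classical
  -- u has a neighbor
  obtain ⟨v₀, hv₀⟩ := hfar u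
  have huv₀ : u ≠ v₀ := by
    rintro rfl; simp [SimpleGraph.dist_self] at hv₀
  obtain ⟨pw⟩ := hG u v₀
  obtain ⟨x₀, hx₀⟩ : ∃ w, G.Adj u w := by
    cases pw with
    | nil => exact absurd rfl huv₀
    | cons h _ => exact ⟨_, h⟩
  -- diagonal-block entries
  have hsame : ∀ b : W, ADMatrix (lexProd G H) (u, a) (u, b)
      = if H.Adj a b then 1 else 0 := by
    intro b
    by_cases hab : H.Adj a b
    · have : (lexProd G H).dist (u, a) (u, b) = 1 :=
        SimpleGraph.dist_eq_one_iff_adj.mpr (Or.inr ⟨rfl, hab⟩)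
      simp [ADMatrix, this, hab]
    · by_cases hba : b = a
      · subst hba
        have h0 : (lexProd G H).dist (u, b) (u, b) = 0 := SimpleGraph.dist_self
        simp [ADMatrix, h0, hab]
        omega
      · -- distance is 2 here: ≤ 2 and not adjacent
        have hadj : ¬ (lexProd G H).Adj (u, a) (u, b) := by
          rintro (h | ⟨-, h⟩)
          · exact G.irrefl h
          · exact hab h
        have hle : (lexProd G H).dist (u, a) (u, b) ≤ 2 := by
          have ha1 : (lexProd G H).Adj (u, a) (x₀, b) := Or.inl hx₀
          have ha2 : (lexProd G H).Adj (x₀, b) (u, b) := Or.inl hx₀.symm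
          have := SimpleGraph.dist_le
            (SimpleGraph.Walk.cons ha1 (SimpleGraph.Walk.cons ha2 SimpleGraph.Walk.nil))
          simpa using this
        have hne1 : (lexProd G H).dist (u, a) (u, b) ≠ 1 := by
          intro h; exact hadj (SimpleGraph.dist_eq_one_iff_adj.mp h)
        have hned : (lexProd G H).dist (u, a) (u, b) ≠ (lexProd G H).diam := by omega
        simp [ADMatrix, hne1, hned, hab]
  -- off-diagonal-block entries depend only on the first coordinates
  have hdiff : ∀ v : V, v ≠ u → ∀ b : W, ADMatrix (lexProd G H) (u, a) (v, b)
      = (if G.dist u v = 1 then 1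
         else if G.dist u v = (lexProd G H).diam then ((lexProd G H).diam : ℝ) else 0) := by
    intro v hv b
    have := lex_dist_of_ne (H := H) hG (Ne.symm hv) a b
    simp [ADMatrix, this]
  have key : (H.adjMatrix ℝ).mulVec X a = mu * X a := by
    have := congrFun hX a; simpa using this
  have hAsum : ∑ b, (if H.Adj a b then (1 : ℝ) else 0) * X b = mu * X a := by
    rw [← key]
    simp [Matrix.mulVec, dotProduct, SimpleGraph.adjMatrix, ite_mul]
  calc (ADMatrix (lexProd G H)).mulVec (fun p => Y p.1 * X p.2) (u, a)
      = ∑ v, ∑ b, ADMatrix (lexProd G H) (u, a) (v, b) * (Y v * X b) := by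
        simp only [Matrix.mulVec, dotProduct]
        rw [Fintype.sum_prod_type]
    _ = ∑ v, (if v = u then ∑ b, (if H.Adj a b then (1:ℝ) else 0) * (Y v * X b)
          else 0) := by
        apply Finset.sum_congr rfl
        intro v _
        by_cases hv : v = u
        · subst hv
          simp only [if_pos rfl]
          exact Finset.sum_congr rfl fun b _ => by rw [hsame b]
        · rw [if_neg hv]
          have : ∀ b : W, ADMatrix (lexProd G H) (u, a) (v, b) * (Y v * X b)
              = ((if G.dist u v = 1 then 1
                else if G.dist u v = (lexProd G H).diam then ((lexProd G H).diam : ℝ) else 0)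
                * Y v) * X b := by
            intro b; rw [hdiff v hv b]; ring
          rw [Finset.sum_congr rfl fun b _ => this b, ← Finset.mul_sum, horth, mul_zero]
    _ = ∑ b, (if H.Adj a b then (1:ℝ) else 0) * (Y u * X b) := by
        rw [Finset.sum_ite_eq' Finset.univ u]
        simp
    _ = mu * (Y u * X a) := by
        have h2 : ∑ b, (if H.Adj a b then (1:ℝ) else 0) * (Y u * X b)
            = Y u * ∑ b, (if H.Adj a b then (1:ℝ) else 0) * X b := by
          rw [Finset.mul_sum]; exact Finset.sum_congr rfl fun b _ => by ring
        rw [h2, hAsum]; ring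
    _ = mu • (fun p : V × W => Y p.1 * X p.2) (u, a) := rfl
end
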